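/- arXiv:1307.4188 — 7 statements merged into one kernel-verified Lean document; each statement's English description precedes it below -/
import Mathlib

section
/- Let 0<q<1 and w∈ℂ∖{0}. For every s∈ℂ with Re(s)>0, the series 4·Σ_{n=1}^∞ n·(|w|·[n]_q)^{-s} defining the spectral zeta function ζ_D(s) of the standard Podleś sphere converges absolutely and equals 4·((1−q²)/|w|)^s · Σ_{k=0}^∞ (k+1)·q^{ks}/(1−q^{2(k+1)})^s; moreover, writing s=x+iy with x>0, one has |ζ_D(s)| ≤ 4/(|w|^x·(1−q^x)²). In particular ζ_D(s) is finite for every s with Re(s)>0. -/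
open Complex Real

/-- The q-number `[n]_q = (q^{-n} - q^n)/(q^{-1} - q)`. -/
noncomputable def qnum (q : ℝ) (n : ℕ) : ℝ :=
  (q ^ (-(n : ℤ)) - q ^ (n : ℤ)) / (q ^ (-1 : ℤ) - q)

lemma qnum_succ_eq (q : ℝ) (hq : 0 < q) (hq1 : q < 1) (n : ℕ) :
    qnum q (n + 1) = (1 - q ^ (2 * (n + 1))) / (q ^ n * (1 - q ^ 2)) := by
  have hq0 : q ≠ 0 := ne_of_gt hq
  have h2 : (1 : ℝ) - q ^ 2 ≠ 0 := by nlinarith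
  unfold qnum
  simp only [zpow_neg, zpow_natCast, zpow_one]
  have hqn1 : q ^ (n + 1) ≠ 0 := by positivity
  have e1 : (q ^ (n + 1))⁻¹ - q ^ (n + 1) = (1 - q ^ (2 * (n + 1))) / q ^ (n + 1) := by
    field_simp
    ring
  have e2 : q⁻¹ - q = (1 - q ^ 2) / q := by
    field_simp
  rw [e1, e2]
  field_simp
  ring

/-- for `Re s > 0`, the series defining the spectral zeta function of the
standard Podleś sphere converges absolutely, equals the rewritten series, and admits the
bound `|ζ_D(s)| ≤ 4/(|w|^x (1-q^x)²)` where `x = Re s`. -/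
theorem podles_zeta_convergence (q : ℝ) (hq : 0 < q) (hq1 : q < 1)
    (w : ℂ) (hw : w ≠ 0) (s : ℂ) (hs : 0 < s.re) :
    Summable (fun n : ℕ =>
      ‖4 * ((n : ℂ) + 1) * ((‖w‖ * qnum q (n + 1) : ℝ) : ℂ) ^ (-s)‖) ∧
    (∑' n : ℕ, 4 * ((n : ℂ) + 1) * ((‖w‖ * qnum q (n + 1) : ℝ) : ℂ) ^ (-s))
      = 4 * (((1 - q ^ 2) / ‖w‖ : ℝ) : ℂ) ^ s *
        ∑' k : ℕ, ((k : ℂ) + 1) * (q : ℂ) ^ ((k : ℂ) * s) /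
          ((1 - q ^ (2 * (k + 1)) : ℝ) : ℂ) ^ s ∧
    ‖∑' n : ℕ, 4 * ((n : ℂ) + 1) * ((‖w‖ * qnum q (n + 1) : ℝ) : ℂ) ^ (-s)‖
      ≤ 4 / (‖w‖ ^ s.re * (1 - q ^ s.re) ^ 2) := by
  have hq0 : q ≠ 0 := ne_of_gt hq
  have hw0 : (0 : ℝ) < ‖w‖ := norm_pos_iff.mpr hw
  set x := s.re with hx
  have hqx : (0:ℝ) < q ^ x := Real.rpow_pos_of_pos hq x
  have hqx1 : q ^ x < 1 := Real.rpow_lt_one hq.le hq1 hs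
  have hB : ∀ n : ℕ, (0:ℝ) < 1 - q ^ (2 * (n + 1)) := by
    intro n
    have : q ^ (2 * (n + 1)) < 1 := pow_lt_one₀ hq.le hq1 (by omega)
    linarith
  have h2 : (0:ℝ) < 1 - q ^ 2 := by nlinarith
  have hqnum : ∀ n : ℕ, qnum q (n+1) = (1 - q ^ (2 * (n + 1))) / (q ^ n * (1 - q ^ 2)) :=
    qnum_succ_eq q hq hq1
  have hqnum_pos : ∀ n, 0 < qnum q (n + 1) := by
    intro n
    rw [hqnum n]
    have := hB n
    positivity
  have hA : ∀ n, (0:ℝ) < ‖w‖ * qnum q (n + 1) := fun n =>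
    mul_pos hw0 (hqnum_pos n)
  -- norms of terms
  have hnorm : ∀ n : ℕ,
      ‖4 * ((n : ℂ) + 1) * ((‖w‖ * qnum q (n + 1) : ℝ) : ℂ) ^ (-s)‖
        = 4 * ((n:ℝ) + 1) * (‖w‖ * qnum q (n + 1)) ^ (-x) := by
    intro n
    rw [norm_mul, norm_mul,
      Complex.norm_cpow_eq_rpow_re_of_pos (hA n)]
    have h4 : ‖(4:ℂ)‖ = 4 := by norm_num
    have hn : ‖((n:ℂ) + 1)‖ = (n:ℝ) + 1 := by
      rw [show ((n:ℂ) + 1) = (((n + 1 : ℕ)) : ℂ) by push_cast; ring,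
        RCLike.norm_natCast]
      push_cast
      ring
    rw [h4, hn, Complex.neg_re, ← hx]
  -- comparison bound
  have hineq : ∀ n : ℕ, (‖w‖ * qnum q (n + 1)) ^ (-x)
      ≤ (‖w‖) ^ (-x) * (q ^ x) ^ n := by
    intro n
    have hQ : (qnum q (n + 1))⁻¹ ≤ q ^ n := by
      rw [hqnum n, inv_div, div_le_iff₀ (hB n)]
      have h3 : q ^ (2 * (n + 1)) ≤ q ^ 2 := pow_le_pow_of_le_one hq.le hq1.le (by omega)
      have hqn : (0:ℝ) ≤ q ^ n := by positivity
      nlinarith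
    have hinv : (‖w‖ * qnum q (n + 1))⁻¹ ≤ (‖w‖)⁻¹ * q ^ n := by
      rw [mul_inv]
      exact mul_le_mul_of_nonneg_left hQ (inv_nonneg.mpr hw0.le)
    have step1 : (‖w‖ * qnum q (n + 1)) ^ (-x)
        = ((‖w‖ * qnum q (n + 1))⁻¹) ^ x := by
      rw [Real.rpow_neg (hA n).le, ← Real.inv_rpow (hA n).le]
    have step2 : ((‖w‖)⁻¹ * q ^ n) ^ x
        = (‖w‖) ^ (-x) * (q ^ x) ^ n := by
      rw [Real.mul_rpow (inv_nonneg.mpr hw0.le) (pow_nonneg hq.le n), Real.rpow_neg hw0.le,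
        ← Real.inv_rpow hw0.le]
      congr 1
      rw [← Real.rpow_natCast q n, ← Real.rpow_natCast (q ^ x) n,
        ← Real.rpow_mul hq.le, ← Real.rpow_mul hq.le, mul_comm]
    rw [step1, ← step2]
    exact Real.rpow_le_rpow (inv_nonneg.mpr (hA n).le) hinv hs.le
  -- the geometric bound sum
  have hgeom : HasSum (fun n : ℕ => ((n:ℝ) + 1) * (q ^ x) ^ n) (1 / (1 - q ^ x) ^ 2) := by
    have hr : ‖q ^ x‖ < 1 := by rw [Real.norm_eq_abs, abs_of_pos hqx]; exact hqx1
    have hA' : HasSum (fun n : ℕ => (n:ℝ) * (q ^ x) ^ n) ((q ^ x) / (1 - q ^ x) ^ 2) :=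
      hasSum_coe_mul_geometric_of_norm_lt_one hr
    have hB' : HasSum (fun n : ℕ => (q ^ x) ^ n) ((1 - q ^ x)⁻¹) :=
      hasSum_geometric_of_lt_one hqx.le hqx1
    have hsum := hA'.add hB'
    convert hsum using 1
    · funext n; ring
    · have h1 : (1:ℝ) - q ^ x ≠ 0 := by linarith
      field_simp
      ring
  have hbound : HasSum (fun n : ℕ => 4 * (((n:ℝ) + 1) * ((‖w‖) ^ (-x) * (q ^ x) ^ n)))
      (4 * ((‖w‖) ^ (-x) * (1 / (1 - q ^ x) ^ 2))) := by
    have h1 : HasSum (fun n : ℕ => (‖w‖) ^ (-x) * (((n:ℝ) + 1) * (q ^ x) ^ n))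
        ((‖w‖) ^ (-x) * (1 / (1 - q ^ x) ^ 2)) := hgeom.mul_left _
    have h2' := h1.mul_left (4:ℝ)
    convert h2' using 2 with n
    · rfl
    ring
  have hsummable : Summable (fun n : ℕ =>
      ‖4 * ((n : ℂ) + 1) * ((‖w‖ * qnum q (n + 1) : ℝ) : ℂ) ^ (-s)‖) := by
    apply Summable.of_nonneg_of_le (fun n => norm_nonneg _) _ hbound.summable
    intro n
    rw [hnorm n]
    calc 4 * ((n:ℝ) + 1) * (‖w‖ * qnum q (n + 1)) ^ (-x)
        ≤ 4 * ((n:ℝ) + 1) * ((‖w‖) ^ (-x) * (q ^ x) ^ n) :=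
          mul_le_mul_of_nonneg_left (hineq n) (by positivity)
      _ = 4 * (((n:ℝ) + 1) * ((‖w‖) ^ (-x) * (q ^ x) ^ n)) := by ring
  refine ⟨hsummable, ?_, ?_⟩
  · -- equality
    have hterm : ∀ n : ℕ,
        ((‖w‖ * qnum q (n + 1) : ℝ) : ℂ) ^ (-s)
          = (((1 - q ^ 2) / ‖w‖ : ℝ) : ℂ) ^ s *
            ((q : ℂ) ^ ((n : ℂ) * s) / ((1 - q ^ (2 * (n + 1)) : ℝ) : ℂ) ^ s) := by
      intro n
      have hAn := hA n
      have hBn := hB n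
      have hargA : (((‖w‖ * qnum q (n + 1) : ℝ)) : ℂ).arg ≠ π := by
        rw [Complex.arg_ofReal_of_nonneg hAn.le]
        exact Real.pi_ne_zero.symm
      have hargB : (((1 - q ^ (2 * (n + 1)) : ℝ)) : ℂ).arg ≠ π := by
        rw [Complex.arg_ofReal_of_nonneg hBn.le]
        exact Real.pi_ne_zero.symm
      have hargq : ((q : ℝ) : ℂ).arg = 0 := Complex.arg_ofReal_of_nonneg hq.le
      have hinv : (‖w‖ * qnum q (n + 1))⁻¹
          = ((1 - q ^ 2) / ‖w‖) * q ^ n * (1 - q ^ (2 * (n + 1)))⁻¹ := by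
        rw [hqnum n]
        field_simp
      rw [Complex.cpow_neg, ← Complex.inv_cpow _ _ hargA, ← Complex.ofReal_inv, hinv]
      have hc0 : (0:ℝ) ≤ (1 - q ^ 2) / ‖w‖ := div_nonneg h2.le hw0.le
      rw [Complex.ofReal_mul,
        mul_cpow_ofReal_nonneg (mul_nonneg hc0 (pow_nonneg hq.le n))
          (inv_nonneg.mpr hBn.le),
        Complex.ofReal_mul,
        mul_cpow_ofReal_nonneg hc0 (pow_nonneg hq.le n)]
      have hqn : ((q ^ n : ℝ) : ℂ) ^ s = (q : ℂ) ^ ((n : ℂ) * s) := by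
        rw [Complex.ofReal_pow,
          Complex.cpow_nat_mul' (x := (q:ℂ)) (n := n)
            (by rw [hargq, mul_zero]; linarith [Real.pi_pos])
            (by rw [hargq, mul_zero]; exact Real.pi_pos.le) s]
      rw [hqn, Complex.ofReal_inv, Complex.inv_cpow _ _ hargB]
      rw [mul_assoc]
      ring
    calc (∑' n : ℕ, 4 * ((n : ℂ) + 1) * ((‖w‖ * qnum q (n + 1) : ℝ) : ℂ) ^ (-s))
        = ∑' n : ℕ, (4 * (((1 - q ^ 2) / ‖w‖ : ℝ) : ℂ) ^ s) *
            (((n : ℂ) + 1) * (q : ℂ) ^ ((n : ℂ) * s) /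
              ((1 - q ^ (2 * (n + 1)) : ℝ) : ℂ) ^ s) := by
          apply tsum_congr
          intro n
          rw [hterm n]
          ring
      _ = (4 * (((1 - q ^ 2) / ‖w‖ : ℝ) : ℂ) ^ s) *
            ∑' k : ℕ, ((k : ℂ) + 1) * (q : ℂ) ^ ((k : ℂ) * s) /
              ((1 - q ^ (2 * (k + 1)) : ℝ) : ℂ) ^ s := tsum_mul_left
      _ = _ := by ring
  · -- bound
    calc ‖∑' n : ℕ, 4 * ((n : ℂ) + 1) * ((‖w‖ * qnum q (n + 1) : ℝ) : ℂ) ^ (-s)‖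
        ≤ ∑' n : ℕ, ‖4 * ((n : ℂ) + 1) * ((‖w‖ * qnum q (n + 1) : ℝ) : ℂ) ^ (-s)‖ :=
          norm_tsum_le_tsum_norm hsummable
      _ ≤ ∑' n : ℕ, 4 * (((n:ℝ) + 1) * ((‖w‖) ^ (-x) * (q ^ x) ^ n)) := by
          apply Summable.tsum_le_tsum _ hsummable hbound.summable
          intro n
          rw [hnorm n]
          calc 4 * ((n:ℝ) + 1) * (‖w‖ * qnum q (n + 1)) ^ (-x)
              ≤ 4 * ((n:ℝ) + 1) * ((‖w‖) ^ (-x) * (q ^ x) ^ n) :=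
                mul_le_mul_of_nonneg_left (hineq n) (by positivity)
            _ = 4 * (((n:ℝ) + 1) * ((‖w‖) ^ (-x) * (q ^ x) ^ n)) := by ring
      _ = 4 * ((‖w‖) ^ (-x) * (1 / (1 - q ^ x) ^ 2)) := hbound.tsum_eq
      _ = 4 / (‖w‖ ^ x * (1 - q ^ x) ^ 2) := by
          rw [Real.rpow_neg hw0.le]
          have h1 : (1:ℝ) - q ^ x ≠ 0 := by linarith
          have h2' : ‖w‖ ^ x ≠ 0 := ne_of_gt (Real.rpow_pos_of_pos hw0 x)
          field_simp
end

section
/- Let 0<q<1 and w∈ℂ∖{0}. For every s∈ℂ with Re(s)>0, ζ_D(s) = 4·((1−q²)/|w|)^s · Σ_{n=0}^∞ (Γ(s+n)/(n!·Γ(s))) · q^{2n}/(1−q^{s+2n})², where Γ(s+n)/Γ(s) = ∏_{j=0}^{n-1}(s+j) is the rising factorial, and the series on the right converges absolutely. -/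
open Complex Real

section Helpers

lemma cpow_pos_eq_exp {x : ℝ} (hx : 0 < x) (c : ℂ) :
    (x : ℂ) ^ c = Complex.exp (c * Real.log x) := by
  rw [Complex.cpow_def_of_ne_zero (by exact_mod_cast hx.ne'), ← Complex.ofReal_log hx.le,
    mul_comm]

lemma hasSum_add_one_mul_geometric {r : ℂ} (hr : ‖r‖ < 1) :
    HasSum (fun m : ℕ => ((m : ℂ) + 1) * r ^ m) (1 / (1 - r) ^ 2) := by
  have h1 := hasSum_coe_mul_geometric_of_norm_lt_one (𝕜 := ℂ) hr
  have h2 := hasSum_geometric_of_norm_lt_one hr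
  have hne : (1 : ℂ) - r ≠ 0 := by
    intro h
    rw [sub_eq_zero] at h
    simp [← h] at hr
  have := h1.add h2
  rw [show (1 / (1 - r) ^ 2) = r / (1 - r) ^ 2 + (1 - r)⁻¹ by field_simp; ring]
  exact this.congr_fun fun m => by ring

lemma one_sub_mem_slitPlane {z : ℂ} (hz : ‖z‖ < 1) : (1 - z) ∈ Complex.slitPlane := by
  rw [Complex.mem_slitPlane_iff]
  left
  have : z.re ≤ ‖z‖ := Complex.re_le_norm z
  simp only [Complex.sub_re, Complex.one_re]
  linarith

lemma podles_binomialSeries (s : ℂ) {x : ℂ} (hx : ‖x‖ < 1) :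
    HasSum (fun n : ℕ => (∏ j ∈ Finset.range n, (s + (j : ℂ))) / (n.factorial : ℂ) * x ^ n)
      ((1 - x) ^ (-s)) := by
  set g : ℂ → ℂ := fun z => (1 - z) ^ (-s) with hg
  have hdiff : DifferentiableOn ℂ g (Metric.ball (0 : ℂ) 1) := by
    intro z hz
    rw [Metric.mem_ball, dist_zero_right] at hz
    exact (((hasDerivAt_id z).const_sub 1).cpow_const
      (one_sub_mem_slitPlane hz)).differentiableAt.differentiableWithinAt
  have hiter : ∀ n : ℕ, ∀ z ∈ Metric.ball (0 : ℂ) 1,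
      iteratedDeriv n g z = (∏ j ∈ Finset.range n, (s + (j : ℂ))) * (1 - z) ^ (-s - n) := by
    intro n
    induction n with
    | zero => intro z hz; simp [g]
    | succ n ih =>
      intro z hz
      rw [iteratedDeriv_succ]
      have hev : iteratedDeriv n g =ᶠ[nhds z]
          fun w => (∏ j ∈ Finset.range n, (s + (j : ℂ))) * (1 - w) ^ (-s - n) := by
        filter_upwards [Metric.isOpen_ball.mem_nhds hz] with w hw using ih w hw
      rw [hev.deriv_eq]
      rw [Metric.mem_ball, dist_zero_right] at hz
      have hd : HasDerivAt (fun w : ℂ => (1 - w) ^ (-s - (n : ℂ)))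
          ((-s - n) * (1 - z) ^ (-s - (n : ℂ) - 1) * (-1)) z :=
        ((hasDerivAt_id z).const_sub 1).cpow_const (one_sub_mem_slitPlane hz)
      rw [(hd.const_mul _).deriv]
      rw [Finset.prod_range_succ]
      have hexp : (-s - ((n : ℂ) + 1)) = -s - (n : ℂ) - 1 := by ring
      push_cast
      rw [hexp]
      ring
  have hx0 : x ∈ Metric.ball (0 : ℂ) 1 := by simpa [Metric.mem_ball, dist_zero_right] using hx
  have H := Complex.hasSum_taylorSeries_on_ball hdiff hx0
  have h0 : (0 : ℂ) ∈ Metric.ball (0 : ℂ) 1 := by simp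
  have hgx : g x = (1 - x) ^ (-s) := rfl
  rw [hgx] at H
  refine H.congr_fun fun n => ?_
  rw [hiter n 0 h0]
  simp only [sub_zero, smul_eq_mul, Complex.one_cpow]
  ring

lemma binom_summable_real (t : ℝ) {x : ℝ} (hx0 : 0 ≤ x) (hx : x < 1) :
    Summable (fun n : ℕ => (∏ j ∈ Finset.range n, (t + j)) / (n.factorial : ℝ) * x ^ n) := by
  have h := (podles_binomialSeries (t : ℂ) (x := (x : ℂ)) (by
    rwa [Complex.norm_real, Real.norm_eq_abs, _root_.abs_of_nonneg hx0])).summable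
  rw [← Complex.summable_ofReal]
  refine h.congr fun n => ?_
  push_cast
  ring

lemma norm_prod_le_rise (s : ℂ) (n : ℕ) :
    ‖∏ j ∈ Finset.range n, (s + (j : ℂ))‖ ≤ ∏ j ∈ Finset.range n, (‖s‖ + j) := by
  rw [norm_prod]
  refine Finset.prod_le_prod (fun j _ => norm_nonneg _) fun j _ => ?_
  calc ‖s + (j : ℂ)‖ ≤ ‖s‖ + ‖(j : ℂ)‖ := norm_add_le _ _
    _ = ‖s‖ + j := by simp

lemma claim1 (q : ℝ) (hq : 0 < q) (hq1 : q < 1) (w : ℂ) (hw : w ≠ 0) (s : ℂ) (m : ℕ) :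
    (((1 - q ^ 2) / ‖w‖ : ℝ) : ℂ) ^ s * (Complex.exp (s * Real.log q)) ^ m *
      (1 - (q : ℂ) ^ (2 * (m + 1))) ^ (-s)
    = ((‖w‖ * qnum q (m + 1) : ℝ) : ℂ) ^ (-s) := by
  have habs : 0 < ‖w‖ := norm_pos_iff.mpr hw
  have hq2 : q ^ 2 < 1 := by nlinarith
  have h2 : (0 : ℝ) < 1 - q ^ 2 := by linarith
  have hA : 0 < (1 - q ^ 2) / ‖w‖ := div_pos h2 habs
  have hqm : (0 : ℝ) < q ^ (2 * (m + 1)) := by positivity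
  have hqm1 : q ^ (2 * (m + 1)) < 1 := by
    apply pow_lt_one₀ hq.le hq1; omega
  have hB : (0 : ℝ) < 1 - q ^ (2 * (m + 1)) := by linarith
  have hq0 : q ≠ 0 := hq.ne'
  have hden : 0 < q⁻¹ - q := by
    rw [show q⁻¹ - q = (1 - q ^ 2) / q by field_simp]
    positivity
  have hqnum : ‖w‖ * qnum q (m + 1)
      = ((1 - q ^ 2) / ‖w‖)⁻¹ * ((q ^ m)⁻¹ * (1 - q ^ (2 * (m + 1)))) := by
    rw [qnum]
    simp only [zpow_neg, zpow_natCast, zpow_one]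
    rw [mul_div_assoc', div_eq_iff hden.ne']
    field_simp
    ring
  have hV : 0 < ‖w‖ * qnum q (m + 1) := by rw [hqnum]; positivity
  have hlog : Real.log (‖w‖ * qnum q (m + 1))
      = -Real.log ((1 - q ^ 2) / ‖w‖) - m * Real.log q +
        Real.log (1 - q ^ (2 * (m + 1))) := by
    rw [hqnum, Real.log_mul (by positivity) (by positivity),
      Real.log_mul (by positivity) (by positivity), Real.log_inv, Real.log_inv, Real.log_pow]
    push_cast; ring
  have hcast : (1 : ℂ) - (q : ℂ) ^ (2 * (m + 1)) = ((1 - q ^ (2 * (m + 1)) : ℝ) : ℂ) := by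
    push_cast; ring
  rw [hcast, cpow_pos_eq_exp hA, cpow_pos_eq_exp hB, cpow_pos_eq_exp hV, ← Complex.exp_nat_mul,
    ← Complex.exp_add, ← Complex.exp_add]
  congr 1
  rw [hlog]
  push_cast
  ring

lemma cpow_s_add_two_n (q : ℝ) (hq : 0 < q) (s : ℂ) (n : ℕ) :
    (q : ℂ) ^ (s + 2 * (n : ℂ)) = Complex.exp (s * Real.log q) * (q : ℂ) ^ (2 * n) := by
  rw [cpow_pos_eq_exp hq, add_mul, Complex.exp_add]
  congr 1
  rw [show (2 * (n : ℂ)) = ((2 * n : ℕ) : ℂ) by push_cast; ring, Complex.exp_nat_mul,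
    ← Complex.ofReal_exp, Real.exp_log hq]

lemma norm_exp_s_log (q : ℝ) (hq : 0 < q) (s : ℂ) :
    ‖Complex.exp (s * Real.log q)‖ = q ^ s.re := by
  rw [Complex.norm_exp, Real.rpow_def_of_pos hq, mul_comm]
  congr 1
  simp [Complex.mul_re]

end Helpers

set_option maxHeartbeats 1000000 in
/-- for `Re s > 0`,
`ζ_D(s) = 4 ((1-q²)/|w|)^s · Σ_{n≥0} (Γ(s+n)/(n! Γ(s))) · q^{2n}/(1-q^{s+2n})²`,
where `Γ(s+n)/Γ(s) = ∏_{j<n}(s+j)` is the rising factorial, the right-hand series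
converging absolutely. -/
theorem podles_zeta_meromorphic_form (q : ℝ) (hq : 0 < q) (hq1 : q < 1)
    (w : ℂ) (hw : w ≠ 0) (s : ℂ) (hs : 0 < s.re) :
    Summable (fun n : ℕ =>
      ‖(∏ j ∈ Finset.range n, (s + (j : ℂ))) / (n.factorial : ℂ) *
        ((q : ℂ) ^ (2 * n) / (1 - (q : ℂ) ^ (s + 2 * (n : ℂ))) ^ 2)‖) ∧
    (∑' n : ℕ, 4 * ((n : ℂ) + 1) * ((‖w‖ * qnum q (n + 1) : ℝ) : ℂ) ^ (-s))
      = 4 * (((1 - q ^ 2) / ‖w‖ : ℝ) : ℂ) ^ s *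
        ∑' n : ℕ, (∏ j ∈ Finset.range n, (s + (j : ℂ))) / (n.factorial : ℂ) *
          ((q : ℂ) ^ (2 * n) / (1 - (q : ℂ) ^ (s + 2 * (n : ℂ))) ^ 2) := by
  have habs : 0 < ‖w‖ := norm_pos_iff.mpr hw
  have hq0 : (0:ℝ) ≤ q := hq.le
  have hq2 : q ^ 2 < 1 := by nlinarith
  have hq2' : (0:ℝ) ≤ q ^ 2 := by positivity
  -- the real number q^σ
  have hqσpos : 0 < q ^ s.re := Real.rpow_pos_of_pos hq _
  have hqσ : q ^ s.re < 1 := Real.rpow_lt_one hq0 hq1 hs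
  set e : ℂ := Complex.exp (s * Real.log q) with he_def
  have he_norm : ‖e‖ = q ^ s.re := norm_exp_s_log q hq s
  -- the summand on the double index set
  set F : ℕ × ℕ → ℂ := fun p =>
    4 * ((p.1 : ℂ) + 1) * (((1 - q ^ 2) / ‖w‖ : ℝ) : ℂ) ^ s * e ^ p.1 *
      ((∏ j ∈ Finset.range p.2, (s + (j : ℂ))) / (p.2.factorial : ℂ) *
        ((q : ℂ) ^ (2 * (p.1 + 1))) ^ p.2) with hF_def
  -- summability of the double series
  have hg1 : Summable (fun m : ℕ =>
      (4 * ‖(((1 - q ^ 2) / ‖w‖ : ℝ) : ℂ) ^ s‖) * (((m : ℝ) + 1) * (q ^ s.re) ^ m)) := by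
    apply Summable.mul_left
    have h := (hasSum_add_one_mul_geometric (r := ((q ^ s.re : ℝ) : ℂ)) (by
      rw [Complex.norm_real, Real.norm_eq_abs, _root_.abs_of_nonneg hqσpos.le]; exact hqσ)).summable
    rw [← Complex.summable_ofReal]
    refine h.congr fun m => ?_
    push_cast
    ring
  have hg2 : Summable (fun n : ℕ =>
      (∏ j ∈ Finset.range n, (‖s‖ + j)) / (n.factorial : ℝ) * (q ^ 2) ^ n) :=
    binom_summable_real ‖s‖ hq2' hq2
  have hg1nn : ∀ m : ℕ, 0 ≤ (4 * ‖(((1 - q ^ 2) / ‖w‖ : ℝ) : ℂ) ^ s‖) *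
      (((m : ℝ) + 1) * (q ^ s.re) ^ m) := by
    intro m; positivity
  have hg2nn : ∀ n : ℕ, 0 ≤ (∏ j ∈ Finset.range n, (‖s‖ + j)) / (n.factorial : ℝ) * (q ^ 2) ^ n := by
    intro n
    have : 0 ≤ ∏ j ∈ Finset.range n, (‖s‖ + j) :=
      Finset.prod_nonneg fun j _ => by positivity
    positivity
  have hFnorm : Summable fun p : ℕ × ℕ => ‖F p‖ := by
    refine Summable.of_nonneg_of_le (fun p => norm_nonneg _) ?_
      (hg1.mul_of_nonneg hg2 hg1nn hg2nn)
    rintro ⟨m, n⟩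
    have hprod : 0 ≤ ∏ j ∈ Finset.range n, (‖s‖ + j) :=
      Finset.prod_nonneg fun j _ => by positivity
    simp only [hF_def, norm_mul, norm_pow, norm_div, he_norm]
    have h1 : ‖(4 : ℂ)‖ = 4 := by norm_num
    have h2 : ‖((m : ℂ) + 1)‖ = (m : ℝ) + 1 := by
      rw [show ((m : ℂ) + 1) = ((m + 1 : ℕ) : ℂ) by push_cast; ring, Complex.norm_natCast]
      push_cast; ring
    have h3 : ‖(n.factorial : ℂ)‖ = (n.factorial : ℝ) := by
      rw [Complex.norm_natCast]
    have h4 : ‖(q : ℂ)‖ = q := by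
      rw [Complex.norm_real, Real.norm_eq_abs, _root_.abs_of_nonneg hq0]
    rw [h1, h2, h3, h4]
    have hbound : (q ^ (2 * (m + 1))) ^ n ≤ (q ^ 2) ^ n := by
      apply pow_le_pow_left₀ (by positivity)
      calc q ^ (2 * (m + 1)) = (q ^ 2) ^ (m + 1) := by rw [← pow_mul]
        _ ≤ (q ^ 2) ^ 1 := pow_le_pow_of_le_one hq2' hq2.le (by omega)
        _ = q ^ 2 := pow_one _
    have hp := norm_prod_le_rise s n
    calc 4 * ((m : ℝ) + 1) * ‖(((1 - q ^ 2) / ‖w‖ : ℝ) : ℂ) ^ s‖ * (q ^ s.re) ^ m *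
          (‖∏ j ∈ Finset.range n, (s + (j : ℂ))‖ / (n.factorial : ℝ) * (q ^ (2 * (m + 1))) ^ n)
        ≤ 4 * ((m : ℝ) + 1) * ‖(((1 - q ^ 2) / ‖w‖ : ℝ) : ℂ) ^ s‖ * (q ^ s.re) ^ m *
          ((∏ j ∈ Finset.range n, (‖s‖ + j)) / (n.factorial : ℝ) * (q ^ 2) ^ n) := by
          gcongr
      _ = (4 * ‖(((1 - q ^ 2) / ‖w‖ : ℝ) : ℂ) ^ s‖) * (((m : ℝ) + 1) * (q ^ s.re) ^ m) *
          ((∏ j ∈ Finset.range n, (‖s‖ + j)) / (n.factorial : ℝ) * (q ^ 2) ^ n) := by ring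
  have hFsum : Summable F := Summable.of_norm hFnorm
  have hFhas : HasSum F (∑' p, F p) := hFsum.hasSum
  -- row sums
  have hrow : ∀ m : ℕ, HasSum (fun n : ℕ => F (m, n))
      (4 * ((m : ℂ) + 1) * ((‖w‖ * qnum q (m + 1) : ℝ) : ℂ) ^ (-s)) := by
    intro m
    have hxlt : ‖(q : ℂ) ^ (2 * (m + 1))‖ < 1 := by
      rw [norm_pow, Complex.norm_real, Real.norm_eq_abs, _root_.abs_of_nonneg hq0]
      apply pow_lt_one₀ hq0 hq1; omega
    have hb := (podles_binomialSeries s hxlt).mul_left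
      (4 * ((m : ℂ) + 1) * (((1 - q ^ 2) / ‖w‖ : ℝ) : ℂ) ^ s * e ^ m)
    have hval : 4 * ((m : ℂ) + 1) * (((1 - q ^ 2) / ‖w‖ : ℝ) : ℂ) ^ s * e ^ m *
        (1 - (q : ℂ) ^ (2 * (m + 1))) ^ (-s)
        = 4 * ((m : ℂ) + 1) * ((‖w‖ * qnum q (m + 1) : ℝ) : ℂ) ^ (-s) := by
      rw [← claim1 q hq hq1 w hw s m]
      ring
    rw [hval] at hb
    exact hb
  have hL : HasSum (fun m : ℕ =>
      4 * ((m : ℂ) + 1) * ((‖w‖ * qnum q (m + 1) : ℝ) : ℂ) ^ (-s)) (∑' p, F p) :=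
    hFhas.prod_fiberwise hrow
  -- column sums
  have hcol : ∀ n : ℕ, HasSum (fun m : ℕ => F (m, n))
      (4 * (((1 - q ^ 2) / ‖w‖ : ℝ) : ℂ) ^ s *
        ((∏ j ∈ Finset.range n, (s + (j : ℂ))) / (n.factorial : ℂ) *
          ((q : ℂ) ^ (2 * n) / (1 - (q : ℂ) ^ (s + 2 * (n : ℂ))) ^ 2))) := by
    intro n
    have hq2n : ‖(q : ℂ) ^ (2 * n)‖ ≤ 1 := by
      rw [norm_pow, Complex.norm_real, Real.norm_eq_abs, _root_.abs_of_nonneg hq0]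
      exact pow_le_one₀ hq0 hq1.le
    have hrn : ‖e * (q : ℂ) ^ (2 * n)‖ < 1 := by
      rw [norm_mul, he_norm]
      calc q ^ s.re * ‖(q : ℂ) ^ (2 * n)‖ ≤ q ^ s.re * 1 := by gcongr
        _ < 1 := by rw [mul_one]; exact hqσ
    have hg := (hasSum_add_one_mul_geometric hrn).mul_left
      (4 * (((1 - q ^ 2) / ‖w‖ : ℝ) : ℂ) ^ s *
        ((∏ j ∈ Finset.range n, (s + (j : ℂ))) / (n.factorial : ℂ)) * (q : ℂ) ^ (2 * n))
    have hfun : ∀ m : ℕ, F (m, n)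
        = 4 * (((1 - q ^ 2) / ‖w‖ : ℝ) : ℂ) ^ s *
          ((∏ j ∈ Finset.range n, (s + (j : ℂ))) / (n.factorial : ℂ)) * (q : ℂ) ^ (2 * n) *
          (((m : ℂ) + 1) * (e * (q : ℂ) ^ (2 * n)) ^ m) := by
      intro m
      simp only [hF_def]
      have hpow : ((q : ℂ) ^ (2 * (m + 1))) ^ n = (q : ℂ) ^ (2 * n) * ((q : ℂ) ^ (2 * n)) ^ m := by
        rw [← pow_mul, ← pow_mul, ← pow_add]
        congr 1
        ring
      rw [hpow, mul_pow]
      ring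
    have hvalue : 4 * (((1 - q ^ 2) / ‖w‖ : ℝ) : ℂ) ^ s *
          ((∏ j ∈ Finset.range n, (s + (j : ℂ))) / (n.factorial : ℂ)) * (q : ℂ) ^ (2 * n) *
          (1 / (1 - e * (q : ℂ) ^ (2 * n)) ^ 2)
        = 4 * (((1 - q ^ 2) / ‖w‖ : ℝ) : ℂ) ^ s *
          ((∏ j ∈ Finset.range n, (s + (j : ℂ))) / (n.factorial : ℂ) *
            ((q : ℂ) ^ (2 * n) / (1 - (q : ℂ) ^ (s + 2 * (n : ℂ))) ^ 2)) := by
      rw [cpow_s_add_two_n q hq s n]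
      ring
    rw [hvalue] at hg
    exact hg.congr_fun hfun
  have hGswap : HasSum (fun p : ℕ × ℕ => F (p.2, p.1)) (∑' p, F p) :=
    (Equiv.prodComm ℕ ℕ).hasSum_iff.mpr hFhas
  have hR : HasSum (fun n : ℕ =>
      4 * (((1 - q ^ 2) / ‖w‖ : ℝ) : ℂ) ^ s *
        ((∏ j ∈ Finset.range n, (s + (j : ℂ))) / (n.factorial : ℂ) *
          ((q : ℂ) ^ (2 * n) / (1 - (q : ℂ) ^ (s + 2 * (n : ℂ))) ^ 2))) (∑' p, F p) :=
    hGswap.prod_fiberwise hcol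
  constructor
  · -- summability of the norms of the right-hand terms
    have hb : ∀ n : ℕ,
        ‖(∏ j ∈ Finset.range n, (s + (j : ℂ))) / (n.factorial : ℂ) *
          ((q : ℂ) ^ (2 * n) / (1 - (q : ℂ) ^ (s + 2 * (n : ℂ))) ^ 2)‖
        ≤ (1 - q ^ s.re)⁻¹ ^ 2 *
          ((∏ j ∈ Finset.range n, (‖s‖ + j)) / (n.factorial : ℝ) * (q ^ 2) ^ n) := by
      intro n
      have hprod : 0 ≤ ∏ j ∈ Finset.range n, (‖s‖ + j) :=
        Finset.prod_nonneg fun j _ => by positivity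
      have hznorm : ‖(q : ℂ) ^ (s + 2 * (n : ℂ))‖ = q ^ s.re * q ^ (2 * n) := by
        rw [Complex.norm_cpow_eq_rpow_re_of_pos hq]
        have : (s + 2 * (n : ℂ)).re = s.re + (2 * n : ℕ) := by push_cast; simp
        rw [this, Real.rpow_add hq, Real.rpow_natCast]
      have hzle : ‖(q : ℂ) ^ (s + 2 * (n : ℂ))‖ ≤ q ^ s.re := by
        rw [hznorm]
        calc q ^ s.re * q ^ (2 * n) ≤ q ^ s.re * 1 := by
              gcongr
              exact pow_le_one₀ hq0 hq1.le
          _ = q ^ s.re := mul_one _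
      have hden : 1 - q ^ s.re ≤ ‖1 - (q : ℂ) ^ (s + 2 * (n : ℂ))‖ := by
        calc 1 - q ^ s.re ≤ ‖(1 : ℂ)‖ - ‖(q : ℂ) ^ (s + 2 * (n : ℂ))‖ := by
              rw [norm_one]; linarith
          _ ≤ ‖1 - (q : ℂ) ^ (s + 2 * (n : ℂ))‖ := norm_sub_norm_le _ _
      have hdenpos : (0:ℝ) < 1 - q ^ s.re := by linarith
      have h4 : ‖(q : ℂ)‖ = q := by
        rw [Complex.norm_real, Real.norm_eq_abs, _root_.abs_of_nonneg hq0]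
      rw [norm_mul, norm_div, norm_div, norm_pow, norm_pow, h4, Complex.norm_natCast]
      have hqq : q ^ (2 * n) = (q ^ 2) ^ n := by rw [← pow_mul]
      have hsq : (1 - q ^ s.re) ^ 2 ≤ ‖1 - (q : ℂ) ^ (s + 2 * (n : ℂ))‖ ^ 2 :=
        pow_le_pow_left₀ hdenpos.le hden 2
      have hfrac : q ^ (2 * n) / ‖1 - (q : ℂ) ^ (s + 2 * (n : ℂ))‖ ^ 2
          ≤ q ^ (2 * n) / (1 - q ^ s.re) ^ 2 :=
        div_le_div_of_nonneg_left (by positivity) (by positivity) hsq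
      have hnum : ‖∏ j ∈ Finset.range n, (s + (j : ℂ))‖ / (n.factorial : ℝ)
          ≤ (∏ j ∈ Finset.range n, (‖s‖ + j)) / (n.factorial : ℝ) :=
        (div_le_div_iff_of_pos_right (by exact_mod_cast n.factorial_pos)).mpr (norm_prod_le_rise s n)
      calc ‖∏ j ∈ Finset.range n, (s + (j : ℂ))‖ / (n.factorial : ℝ) *
            (q ^ (2 * n) / ‖1 - (q : ℂ) ^ (s + 2 * (n : ℂ))‖ ^ 2)
          ≤ (∏ j ∈ Finset.range n, (‖s‖ + j)) / (n.factorial : ℝ) *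
            (q ^ (2 * n) / (1 - q ^ s.re) ^ 2) :=
            mul_le_mul hnum hfrac (by positivity) (by positivity)
        _ = (1 - q ^ s.re)⁻¹ ^ 2 *
            ((∏ j ∈ Finset.range n, (‖s‖ + j)) / (n.factorial : ℝ) * (q ^ 2) ^ n) := by
            rw [hqq, inv_pow]; ring
    exact Summable.of_nonneg_of_le (fun n => norm_nonneg _) hb (hg2.mul_left _)
  · rw [hL.tsum_eq, ← tsum_mul_left, hR.tsum_eq]
end

section
/- Let 0<q<1, w∈ℂ∖{0}, M∈ℕ and δ∈(0,2), and set c(q,δ) := min{(1−q^{2−δ})², (1−q^{−δ})²}. Then for every s∈ℂ with Re(s) = −2M−δ, the meromorphic continuation Z(s) = 4·((1−q²)/|w|)^s · Σ_{n=0}^∞ ((∏_{j=0}^{n-1}(s+j))/n!) · q^{2n}/(1−q^{s+2n})² satisfies |Z(s)| ≤ 4·c(q,δ)^{-1} · ((1−q²)/|w|)^{Re(s)} · (1−q²)^{−|s|}. -/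
open Complex Real


noncomputable def binCoef (x : ℝ) (n : ℕ) : ℝ :=
  (∏ j ∈ Finset.range n, (x + j)) / n.factorial

lemma binCoef_pos {x : ℝ} (hx : 0 < x) (n : ℕ) : 0 < binCoef x n := by
  unfold binCoef
  exact div_pos (Finset.prod_pos fun j _ => by positivity) (by positivity)

lemma binCoef_succ (x : ℝ) (n : ℕ) :
    binCoef x (n + 1) * ((n : ℝ) + 1) = (x + n) * binCoef x n := by
  unfold binCoef
  rw [Finset.prod_range_succ, Nat.factorial_succ]
  have h1 : (n.factorial : ℝ) ≠ 0 := Nat.cast_ne_zero.mpr n.factorial_ne_zero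
  have h2 : ((n : ℝ) + 1) ≠ 0 := by positivity
  push_cast
  field_simp

lemma summable_core {x ρ : ℝ} (hx : 0 < x) (hρ0 : 0 < ρ) (hρ1 : ρ < 1) :
    Summable (fun n : ℕ => (x + n) * binCoef x n * ρ ^ n) := by
  apply summable_of_ratio_test_tendsto_lt_one hρ1
  · filter_upwards with n
    have := binCoef_pos hx n
    positivity
  · have key : ∀ n : ℕ,
        ‖(x + ((n : ℕ) + 1 : ℕ)) * binCoef x (n + 1) * ρ ^ (n + 1)‖ /
          ‖(x + n) * binCoef x n * ρ ^ n‖ = (x * (1 / ((n : ℝ) + 1)) + 1) * ρ := by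
      intro n
      have hb := binCoef_pos hx n
      have hb' := binCoef_pos hx (n + 1)
      have hxn : (0 : ℝ) < x + n := by positivity
      have h1 : (0 : ℝ) < (n : ℝ) + 1 := by positivity
      have hρn : (0 : ℝ) < ρ ^ n := by positivity
      rw [Real.norm_of_nonneg (by positivity), Real.norm_of_nonneg (by positivity)]
      have hs := binCoef_succ x n
      have hsucc : binCoef x (n + 1) = (x + n) * binCoef x n / ((n : ℝ) + 1) := by
        field_simp
        linarith [hs]
      rw [hsucc]
      push_cast
      rw [pow_succ]
      field_simp
    refine Filter.Tendsto.congr (fun n => (key n).symm) ?_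
    have h0 : Filter.Tendsto (fun n : ℕ => x * (1 / ((n : ℝ) + 1)) + 1) Filter.atTop (nhds (x * 0 + 1)) :=
      (tendsto_one_div_add_atTop_nhds_zero_nat.const_mul x).add tendsto_const_nhds
    have := h0.mul_const ρ
    simpa using this

lemma summable_bin {x ρ : ℝ} (hx : 0 < x) (hρ0 : 0 < ρ) (hρ1 : ρ < 1) :
    Summable (fun n : ℕ => binCoef x n * ρ ^ n) := by
  refine Summable.of_nonneg_of_le (fun n => by have := binCoef_pos hx n; positivity)
    (fun n => ?_) ((summable_core hx hρ0 hρ1).mul_left x⁻¹)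
  have hb := (binCoef_pos hx n).le
  have hρn : (0:ℝ) ≤ ρ ^ n := by positivity
  rw [show x⁻¹ * ((x + n) * binCoef x n * ρ ^ n)
      = ((x + n) / x) * (binCoef x n * ρ ^ n) by field_simp]
  have hge : (1:ℝ) ≤ (x + n) / x :=
    (one_le_div hx).mpr (le_add_of_nonneg_right (Nat.cast_nonneg n))
  calc binCoef x n * ρ ^ n = 1 * (binCoef x n * ρ ^ n) := by ring
    _ ≤ ((x + n) / x) * (binCoef x n * ρ ^ n) :=
        mul_le_mul_of_nonneg_right hge (by positivity)

lemma hasSum_binCoef {x r : ℝ} (hx : 0 < x) (hr0 : 0 < r) (hr1 : r < 1) :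
    HasSum (fun n : ℕ => binCoef x n * r ^ n) ((1 - r) ^ (-x)) := by
  set ρ : ℝ := (1 + r) / 2 with hρ
  have hρ0 : 0 < ρ := by positivity
  have hρ1 : ρ < 1 := by rw [hρ]; linarith
  have hrρ : r < ρ := by rw [hρ]; linarith
  have hu : Summable (fun n : ℕ => ρ⁻¹ * ((x + n) * binCoef x n * ρ ^ n)) :=
    (summable_core hx hρ0 hρ1).mul_left _
  have hg : ∀ (n : ℕ) (y : ℝ), y ∈ Set.Ioo (-ρ) ρ →
      HasDerivAt (fun y : ℝ => binCoef x n * y ^ n) (binCoef x n * (n * y ^ (n - 1))) y :=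
    fun n y _ => (hasDerivAt_pow n y).const_mul _
  have hg' : ∀ (n : ℕ) (y : ℝ), y ∈ Set.Ioo (-ρ) ρ →
      ‖binCoef x n * (n * y ^ (n - 1))‖ ≤ ρ⁻¹ * ((x + n) * binCoef x n * ρ ^ n) := by
    intro n y hy
    have hyρ : |y| ≤ ρ := by rw [abs_le]; exact ⟨hy.1.le, hy.2.le⟩
    match n with
    | 0 =>
      have := binCoef_pos hx 0
      simp only [Nat.cast_zero, zero_mul, mul_zero, norm_zero]
      positivity
    | Nat.succ m =>
      have hbb := (binCoef_pos hx (m + 1)).le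
      have h1 : ‖binCoef x (m+1) * ((((m+1):ℕ):ℝ) * y ^ ((m+1) - 1))‖
          = binCoef x (m+1) * (((m:ℝ)+1) * |y| ^ m) := by
        rw [show ((m+1:ℕ)) - 1 = m from rfl, Real.norm_eq_abs, _root_.abs_mul,
          _root_.abs_mul, _root_.abs_pow, _root_.abs_of_nonneg hbb, Nat.abs_cast]
        push_cast; ring
      rw [h1]
      have h2 : ρ⁻¹ * ((x + ((m+1:ℕ):ℝ)) * binCoef x (m+1) * ρ ^ (m+1))
          = binCoef x (m+1) * ((x + ((m:ℝ)+1)) * ρ ^ m) := by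
        push_cast
        rw [pow_succ]
        field_simp
      rw [h2]
      have h3 : |y| ^ m ≤ ρ ^ m := pow_le_pow_left₀ (abs_nonneg y) hyρ m
      have h5 : (0:ℝ) ≤ |y| ^ m := by positivity
      have : ((m:ℝ)+1) * |y| ^ m ≤ (x + ((m:ℝ)+1)) * ρ ^ m := by nlinarith
      nlinarith
  have h0t : (0:ℝ) ∈ Set.Ioo (-ρ) ρ := by constructor <;> simp [hρ0] <;> linarith
  have hg0 : Summable fun n : ℕ => binCoef x n * (0:ℝ) ^ n := by
    refine Summable.of_nonneg_of_le (fun n => by have := binCoef_pos hx n; positivity)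
      (fun n => ?_) (summable_bin hx hρ0 hρ1)
    have hb := (binCoef_pos hx n).le
    have : (0:ℝ) ^ n ≤ ρ ^ n := pow_le_pow_left₀ le_rfl hρ0.le n
    nlinarith
  have hF : ∀ y ∈ Set.Ioo (-ρ) ρ, HasDerivAt (fun z : ℝ => ∑' n : ℕ, binCoef x n * z ^ n)
      (∑' n : ℕ, binCoef x n * (n * y ^ (n - 1))) y := fun y hy =>
    hasDerivAt_tsum_of_isPreconnected hu isOpen_Ioo isPreconnected_Ioo hg hg' h0t hg0 hy
  -- the ODE relation
  have hrel : ∀ y ∈ Set.Ioo (-ρ) ρ,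
      (1 - y) * (∑' n : ℕ, binCoef x n * (n * y ^ (n - 1)))
        = x * ∑' n : ℕ, binCoef x n * y ^ n := by
    intro y hy
    have hyρ : |y| ≤ ρ := by rw [abs_le]; exact ⟨hy.1.le, hy.2.le⟩
    have Sg' : Summable (fun n : ℕ => binCoef x n * (n * y ^ (n - 1))) :=
      hu.of_norm_bounded (fun n => hg' n y hy)
    have S1 : Summable (fun n : ℕ => (x + n) * binCoef x n * y ^ n) := by
      refine (summable_core hx hρ0 hρ1).of_norm_bounded (fun n => ?_)
      have hb := (binCoef_pos hx n).le
      have h3 : |y| ^ n ≤ ρ ^ n := pow_le_pow_left₀ (abs_nonneg y) hyρ n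
      rw [Real.norm_eq_abs, _root_.abs_mul, _root_.abs_mul, _root_.abs_pow,
        _root_.abs_of_nonneg (by positivity : (0:ℝ) ≤ x + n), _root_.abs_of_nonneg hb]
      exact mul_le_mul_of_nonneg_left h3 (by positivity)
    have S0 : Summable (fun n : ℕ => binCoef x n * y ^ n) := by
      refine (summable_bin hx hρ0 hρ1).of_norm_bounded (fun n => ?_)
      have hb := (binCoef_pos hx n).le
      have h3 : |y| ^ n ≤ ρ ^ n := pow_le_pow_left₀ (abs_nonneg y) hyρ n
      rw [Real.norm_eq_abs, _root_.abs_mul, _root_.abs_pow, _root_.abs_of_nonneg hb]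
      exact mul_le_mul_of_nonneg_left h3 hb
    have Sn : Summable (fun n : ℕ => (n : ℝ) * binCoef x n * y ^ n) :=
      (S1.sub (S0.mul_left x)).congr (fun n => by ring)
    have hD1 : (∑' n : ℕ, binCoef x n * (n * y ^ (n - 1)))
        = ∑' n : ℕ, (x + n) * binCoef x n * y ^ n := by
      rw [Summable.tsum_eq_zero_add Sg']
      have h0 : binCoef x 0 * (((0:ℕ):ℝ) * y ^ (0-1)) = 0 := by norm_num
      rw [h0, zero_add]
      refine tsum_congr fun n => ?_
      have h := binCoef_succ x n
      rw [show (n + 1 : ℕ) - 1 = n from rfl]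
      push_cast
      linear_combination y ^ n * h
    have hyD : y * (∑' n : ℕ, binCoef x n * (n * y ^ (n - 1)))
        = ∑' n : ℕ, (n : ℝ) * binCoef x n * y ^ n := by
      rw [← tsum_mul_left]
      refine tsum_congr fun n => ?_
      cases n with
      | zero => norm_num
      | succ m =>
        rw [show (m + 1 : ℕ) - 1 = m from rfl, pow_succ]
        push_cast; ring
    calc (1 - y) * (∑' n : ℕ, binCoef x n * (n * y ^ (n - 1)))
        = (∑' n : ℕ, binCoef x n * (n * y ^ (n - 1)))
          - y * (∑' n : ℕ, binCoef x n * (n * y ^ (n - 1))) := by ring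
      _ = (∑' n : ℕ, (x + n) * binCoef x n * y ^ n)
          - ∑' n : ℕ, (n : ℝ) * binCoef x n * y ^ n := by rw [hyD, hD1]
      _ = ∑' n : ℕ, ((x + n) * binCoef x n * y ^ n - (n : ℝ) * binCoef x n * y ^ n) :=
          (Summable.tsum_sub S1 Sn).symm
      _ = ∑' n : ℕ, x * (binCoef x n * y ^ n) := tsum_congr fun n => by ring
      _ = x * ∑' n : ℕ, binCoef x n * y ^ n := tsum_mul_left
  -- G is constant on [0, r]
  have hGderiv : ∀ y ∈ Set.Icc (0:ℝ) r,
      HasDerivAt (fun z : ℝ => (∑' n : ℕ, binCoef x n * z ^ n) * (1 - z) ^ x) 0 y := by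
    intro y hy
    have hyt : y ∈ Set.Ioo (-ρ) ρ := ⟨by linarith [hy.1], by linarith [hy.2]⟩
    have hy1 : 0 < 1 - y := by linarith [hy.2]
    have h1 : HasDerivAt (fun z : ℝ => (1 - z) ^ x) (-1 * x * (1 - y) ^ (x - 1)) y := by
      have hid : HasDerivAt (fun z : ℝ => 1 - z) (-1) y := (hasDerivAt_id y).const_sub 1
      exact hid.rpow_const (Or.inl hy1.ne')
    have h2 := (hF y hyt).mul h1
    have hpow : (1 - y) ^ (x - 1) * (1 - y) = (1 - y) ^ x := by
      have h := Real.rpow_add hy1 (x - 1) 1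
      rw [Real.rpow_one] at h
      rw [← h]; norm_num
    have hzero : (∑' n : ℕ, binCoef x n * (n * y ^ (n - 1))) * (1 - y) ^ x
        + (∑' n : ℕ, binCoef x n * y ^ n) * (-1 * x * (1 - y) ^ (x - 1)) = 0 := by
      rw [← hpow]
      linear_combination (1 - y) ^ (x - 1) * hrel y hyt
    rw [hzero] at h2
    exact h2
  have hcont : ContinuousOn (fun z : ℝ => (∑' n : ℕ, binCoef x n * z ^ n) * (1 - z) ^ x)
      (Set.Icc 0 r) := fun y hy => (hGderiv y hy).continuousAt.continuousWithinAt
  have hconst := constant_of_has_deriv_right_zero hcont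
    (fun y hy => (hGderiv y ⟨hy.1, hy.2.le⟩).hasDerivWithinAt)
  have hGr := hconst r ⟨hr0.le, le_rfl⟩
  have hF0 : (∑' n : ℕ, binCoef x n * (0:ℝ) ^ n) = 1 := by
    rw [tsum_eq_single 0 (fun n hn => by rw [zero_pow hn, mul_zero])]
    norm_num [binCoef]
  rw [hF0] at hGr
  norm_num at hGr
  have h1r : (0:ℝ) < 1 - r := by linarith
  have hxr : (0:ℝ) < (1 - r) ^ x := Real.rpow_pos_of_pos h1r x
  have hFr : (∑' n : ℕ, binCoef x n * r ^ n) = (1 - r) ^ (-x) := by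
    rw [Real.rpow_neg h1r.le]
    field_simp
    linarith [hGr]
  have hS : Summable (fun n : ℕ => binCoef x n * r ^ n) := summable_bin hx hr0 hr1
  have := hS.hasSum
  rwa [hFr] at this

/-- The meromorphic continuation
`Z(s) = 4 ((1-q²)/|w|)^s Σ_{n≥0} (∏_{j<n}(s+j)/n!) q^{2n}/(1-q^{s+2n})²`. -/
noncomputable def podlesZetaExt (q : ℝ) (w : ℂ) (s : ℂ) : ℂ :=
  4 * (((1 - q ^ 2) / ‖w‖ : ℝ) : ℂ) ^ s *
    ∑' n : ℕ, (∏ j ∈ Finset.range n, (s + (j : ℂ))) / (n.factorial : ℂ) *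
      ((q : ℂ) ^ (2 * n) / (1 - (q : ℂ) ^ (s + 2 * (n : ℂ))) ^ 2)

/-- on the vertical line `Re s = -2M - δ` (with `M ∈ ℕ`, `δ ∈ (0,2)`),
setting `c(q,δ) = min{(1-q^{2-δ})², (1-q^{-δ})²}`, one has
`|Z(s)| ≤ 4 c(q,δ)⁻¹ ((1-q²)/|w|)^{Re s} (1-q²)^{-|s|}`. -/
theorem podles_zeta_vertical_bound (q : ℝ) (hq : 0 < q) (hq1 : q < 1)
    (w : ℂ) (hw : w ≠ 0) (M : ℕ) (δ : ℝ) (hδ0 : 0 < δ) (hδ2 : δ < 2) :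
    ∀ s : ℂ, s.re = -(2 * M) - δ →
      ‖podlesZetaExt q w s‖
        ≤ 4 * (min ((1 - q ^ (2 - δ)) ^ 2) ((1 - q ^ (-δ)) ^ 2))⁻¹ *
          ((1 - q ^ 2) / ‖w‖) ^ s.re * (1 - q ^ 2) ^ (-‖s‖) := by
  intro s hs
  set c : ℝ := min ((1 - q ^ (2 - δ)) ^ 2) ((1 - q ^ (-δ)) ^ 2) with hcdef
  have hq2 : (0:ℝ) < 1 - q ^ 2 := by nlinarith
  have hq21 : q ^ 2 < 1 := by nlinarith
  have hq20 : (0:ℝ) < q ^ 2 := by positivity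
  have hwabs : 0 < ‖w‖ := norm_pos_iff.mpr hw
  have hB0 : (0:ℝ) < (1 - q ^ 2) / ‖w‖ := div_pos hq2 hwabs
  have hs0 : s ≠ 0 := by
    intro h
    rw [h] at hs
    simp at hs
    nlinarith [Nat.cast_nonneg (α := ℝ) M]
  have hx : 0 < ‖s‖ := norm_pos_iff.mpr hs0
  -- positivity of c
  have h1 : q ^ (2 - δ) < 1 := Real.rpow_lt_one hq.le hq1 (by linarith)
  have h1' : (0:ℝ) < q ^ (2 - δ) := Real.rpow_pos_of_pos hq _
  have h2 : 1 < q ^ (-δ) := Real.one_lt_rpow_iff_of_pos hq |>.mpr (Or.inr ⟨hq1, by linarith⟩)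
  have hc : 0 < c := lt_min (by nlinarith) (by nlinarith)
  -- denominator bound
  have hden : ∀ n : ℕ, c ≤ ‖(1 - (q : ℂ) ^ (s + 2 * (n : ℂ))) ^ 2‖ := by
    intro n
    set z : ℂ := (q : ℂ) ^ (s + 2 * (n : ℂ)) with hz
    have hzn : ‖z‖ = q ^ (s.re + 2 * n) := by
      rw [hz, Complex.norm_cpow_eq_rpow_re_of_pos hq]
      congr 1
      simp
    have key : |1 - ‖z‖| ≤ ‖1 - z‖ := by
      have h := abs_norm_sub_norm_le (1 : ℂ) z
      simpa using h
    have hnp : ‖(1 - z) ^ 2‖ = ‖1 - z‖ ^ 2 := norm_pow _ 2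
    rcases le_or_gt (n : ℝ) (M : ℝ) with hn | hn
    · have he : s.re + 2 * n ≤ -δ := by rw [hs]; push_cast; linarith
      have hzb : q ^ (-δ) ≤ ‖z‖ := by
        rw [hzn]; exact Real.rpow_le_rpow_of_exponent_ge hq hq1.le he
      have hb : q ^ (-δ) - 1 ≤ ‖1 - z‖ := by
        calc q ^ (-δ) - 1 ≤ ‖z‖ - 1 := by linarith
          _ ≤ |1 - ‖z‖| := by rw [abs_sub_comm]; exact le_abs_self _
          _ ≤ ‖1 - z‖ := key
      calc c ≤ (1 - q ^ (-δ)) ^ 2 := min_le_right _ _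
        _ = (q ^ (-δ) - 1) ^ 2 := by ring
        _ ≤ ‖1 - z‖ ^ 2 := by nlinarith
        _ = ‖(1 - z) ^ 2‖ := hnp.symm
    · have hn' : (M : ℝ) + 1 ≤ n := by
        have : M < n := by exact_mod_cast hn
        exact_mod_cast this
      have he : 2 - δ ≤ s.re + 2 * n := by rw [hs]; push_cast; linarith
      have hzb : ‖z‖ ≤ q ^ (2 - δ) := by
        rw [hzn]; exact Real.rpow_le_rpow_of_exponent_ge hq hq1.le he
      have hb : 1 - q ^ (2 - δ) ≤ ‖1 - z‖ := by
        calc 1 - q ^ (2 - δ) ≤ 1 - ‖z‖ := by linarith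
          _ ≤ |1 - ‖z‖| := le_abs_self _
          _ ≤ ‖1 - z‖ := key
      calc c ≤ (1 - q ^ (2 - δ)) ^ 2 := min_le_left _ _
        _ ≤ ‖1 - z‖ ^ 2 := by nlinarith
        _ = ‖(1 - z) ^ 2‖ := hnp.symm
  -- term bound
  have hterm : ∀ n : ℕ,
      ‖(∏ j ∈ Finset.range n, (s + (j : ℂ))) / (n.factorial : ℂ) *
        ((q : ℂ) ^ (2 * n) / (1 - (q : ℂ) ^ (s + 2 * (n : ℂ))) ^ 2)‖
      ≤ binCoef ‖s‖ n * (q ^ 2) ^ n * c⁻¹ := by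
    intro n
    have hfac : (0:ℝ) < (n.factorial : ℝ) := by positivity
    have hdenn := hden n
    have hdpos : (0:ℝ) < ‖(1 - (q : ℂ) ^ (s + 2 * (n : ℂ))) ^ 2‖ := lt_of_lt_of_le hc hdenn
    have hqn : ‖(q : ℂ) ^ (2 * n)‖ = (q ^ 2) ^ n := by
      rw [norm_pow, Complex.norm_real, Real.norm_eq_abs, _root_.abs_of_pos hq, ← pow_mul]
    have hprod : ‖∏ j ∈ Finset.range n, (s + (j : ℂ))‖ ≤ ∏ j ∈ Finset.range n, (‖s‖ + j) := by
      rw [norm_prod]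
      refine Finset.prod_le_prod (fun j _ => norm_nonneg _) (fun j _ => ?_)
      calc ‖s + (j : ℂ)‖ ≤ ‖s‖ + ‖(j : ℂ)‖ := norm_add_le _ _
        _ = ‖s‖ + j := by rw [Complex.norm_natCast]
    rw [norm_mul, norm_div, norm_div]
    rw [Complex.norm_natCast, hqn]
    have hprodnn : (0:ℝ) ≤ ∏ j ∈ Finset.range n, (‖s‖ + j) :=
      Finset.prod_nonneg fun j _ => by positivity
    have step1 : ‖∏ j ∈ Finset.range n, (s + (j : ℂ))‖ / (n.factorial : ℝ)
        ≤ binCoef ‖s‖ n := by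
      rw [binCoef]
      gcongr
    have step2 : (q ^ 2) ^ n / ‖(1 - (q : ℂ) ^ (s + 2 * (n : ℂ))) ^ 2‖
        ≤ (q ^ 2) ^ n * c⁻¹ := by
      rw [div_eq_mul_inv]
      exact mul_le_mul_of_nonneg_left (inv_anti₀ hc hdenn) (by positivity)
    calc ‖∏ j ∈ Finset.range n, (s + (j : ℂ))‖ / (n.factorial : ℝ) *
          ((q ^ 2) ^ n / ‖(1 - (q : ℂ) ^ (s + 2 * (n : ℂ))) ^ 2‖)
        ≤ binCoef ‖s‖ n * ((q ^ 2) ^ n * c⁻¹) := by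
          exact mul_le_mul step1 step2 (by positivity) (binCoef_pos hx n).le
      _ = binCoef ‖s‖ n * (q ^ 2) ^ n * c⁻¹ := by ring
  -- sum bound
  have hsum : HasSum (fun n : ℕ => binCoef ‖s‖ n * (q ^ 2) ^ n * c⁻¹)
      ((1 - q ^ 2) ^ (-‖s‖) * c⁻¹) :=
    (hasSum_binCoef hx hq20 hq21).mul_right c⁻¹
  have hT : ‖∑' n : ℕ, (∏ j ∈ Finset.range n, (s + (j : ℂ))) / (n.factorial : ℂ) *
      ((q : ℂ) ^ (2 * n) / (1 - (q : ℂ) ^ (s + 2 * (n : ℂ))) ^ 2)‖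
      ≤ (1 - q ^ 2) ^ (-‖s‖) * c⁻¹ := tsum_of_norm_bounded hsum hterm
  unfold podlesZetaExt
  rw [norm_mul, norm_mul]
  have h4 : ‖(4:ℂ)‖ = 4 := by norm_num
  have hBs : ‖(((1 - q ^ 2) / ‖w‖ : ℝ) : ℂ) ^ s‖
      = ((1 - q ^ 2) / ‖w‖) ^ s.re := by
    rw [Complex.norm_cpow_eq_rpow_re_of_pos hB0]
  rw [h4, hBs]
  have hBre : (0:ℝ) < ((1 - q ^ 2) / ‖w‖) ^ s.re := Real.rpow_pos_of_pos hB0 _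
  calc 4 * ((1 - q ^ 2) / ‖w‖) ^ s.re *
        ‖∑' n : ℕ, (∏ j ∈ Finset.range n, (s + (j : ℂ))) / (n.factorial : ℂ) *
          ((q : ℂ) ^ (2 * n) / (1 - (q : ℂ) ^ (s + 2 * (n : ℂ))) ^ 2)‖
      ≤ 4 * ((1 - q ^ 2) / ‖w‖) ^ s.re * ((1 - q ^ 2) ^ (-‖s‖) * c⁻¹) :=
        mul_le_mul_of_nonneg_left hT (by positivity)
    _ = 4 * c⁻¹ * ((1 - q ^ 2) / ‖w‖) ^ s.re * (1 - q ^ 2) ^ (-‖s‖) := by ring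
end

section
/- For every η>0, one has arctan(η) > e^{−1−4π/η}·√(1 + 4/η²); that is, the function F(η) := arctan(η) − e^{−1−4π/η}·√(1+4/η²) is strictly positive on (0,∞). -/
open Real

lemma arctan_ge_quarter {η : ℝ} (h0 : 0 < η) (h1 : η ≤ 1) : η / 4 ≤ Real.arctan η := by
  have hπ := Real.pi_gt_three
  have hc : (1 : ℝ) / 4 < Real.cos (η / 4) := by
    have h := Real.one_sub_sq_div_two_le_cos (x := η / 4)
    nlinarith
  have hs : Real.sin (η / 4) < η / 4 := Real.sin_lt (by positivity)
  have htan : Real.tan (η / 4) < η := by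
    rw [Real.tan_eq_sin_div_cos, div_lt_iff₀ (by linarith)]
    nlinarith
  have hm := Real.arctan_strictMono htan
  rw [Real.arctan_tan (by linarith) (by linarith)] at hm
  exact hm.le

/-- for every `η > 0`,
`arctan η > e^{-1-4π/η} √(1 + 4/η²)`, i.e. `F(η) := arctan η − e^{-1-4π/η}√(1+4/η²) > 0`. -/
theorem arctan_exp_inequality (η : ℝ) (hη : 0 < η) :
    Real.exp (-1 - 4 * Real.pi / η) * Real.sqrt (1 + 4 / η ^ 2) < Real.arctan η := by
  have hπ := Real.pi_gt_three
  have hsqrt : Real.sqrt (1 + 4 / η ^ 2) ≤ 1 + 2 / η := by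
    have hsq : 1 + 4 / η ^ 2 ≤ (1 + 2 / η) ^ 2 := by
      have : (1 + 2 / η) ^ 2 = 1 + 4 / η + 4 / η ^ 2 := by field_simp; ring
      rw [this]
      have : 0 < 4 / η := by positivity
      linarith
    calc Real.sqrt (1 + 4 / η ^ 2) ≤ Real.sqrt ((1 + 2 / η) ^ 2) := Real.sqrt_le_sqrt hsq
      _ = 1 + 2 / η := Real.sqrt_sq (by positivity)
  have hexp2 : 1 + 2 / η ≤ Real.exp (2 / η) := by
    have := Real.add_one_le_exp (2 / η); linarith
  have hLHS : Real.exp (-1 - 4 * Real.pi / η) * Real.sqrt (1 + 4 / η ^ 2)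
      ≤ Real.exp (-1 - (4 * Real.pi - 2) / η) := by
    calc Real.exp (-1 - 4 * Real.pi / η) * Real.sqrt (1 + 4 / η ^ 2)
        ≤ Real.exp (-1 - 4 * Real.pi / η) * Real.exp (2 / η) := by
          exact mul_le_mul_of_nonneg_left (hsqrt.trans hexp2) (Real.exp_pos _).le
      _ = Real.exp (-1 - (4 * Real.pi - 2) / η) := by
          rw [← Real.exp_add]; ring_nf
  rcases le_or_gt η 1 with h1 | h1
  · -- small η: exp(-1-(4π-2)/η) < η/(4π-2) ≤ η/4 ≤ arctan η
    obtain ⟨s, hs_def⟩ : ∃ s : ℝ, s = 1 + (4 * Real.pi - 2) / η := ⟨_, rfl⟩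
    have hq : 0 < (4 * Real.pi - 2) / η := div_pos (by linarith) hη
    have hspos : (4 * Real.pi - 2) / η ≤ s := by rw [hs_def]; linarith
    have hexp_lt : Real.exp (-s) < ((4 * Real.pi - 2) / η)⁻¹ := by
      have h1' : s + 1 ≤ Real.exp s := Real.add_one_le_exp s
      have hgt : (4 * Real.pi - 2) / η < Real.exp s := by linarith
      rw [Real.exp_neg]
      exact inv_strictAnti₀ hq hgt
    have hinv : ((4 * Real.pi - 2) / η)⁻¹ ≤ η / 4 := by
      rw [inv_div]
      apply div_le_div_of_nonneg_left hη.le (by linarith) (by linarith)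
    have harc := arctan_ge_quarter hη h1
    have : Real.exp (-1 - (4 * Real.pi - 2) / η) < η / 4 := by
      have : -s = -1 - (4 * Real.pi - 2) / η := by rw [hs_def]; ring
      rw [← this]
      exact lt_of_lt_of_le hexp_lt hinv
    linarith
  · -- large η: LHS ≤ exp(-1) < π/4 ≤ arctan η
    have hmono : Real.exp (-1 - (4 * Real.pi - 2) / η) ≤ Real.exp (-1) := by
      apply Real.exp_le_exp.mpr
      have : 0 < (4 * Real.pi - 2) / η := div_pos (by linarith) hη
      linarith
    have he : Real.exp (-1) < 1 / 2 := by
      rw [Real.exp_neg]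
      have := Real.exp_one_gt_d9
      rw [inv_lt_comm₀ (by positivity) (by norm_num)]
      linarith
    have harc : Real.pi / 4 ≤ Real.arctan η := by
      rw [← Real.arctan_one]
      exact Real.arctan_strictMono.monotone h1.le
    have : (1 : ℝ) / 2 < Real.pi / 4 := by linarith
    linarith
end

section
/- For every n∈ℕ and every ν∈ℂ, the power series Σ_{k=0}^∞ ((−1)^k/k!) · c_{k} · ξ^{k}, where c_k is the n-th derivative at α=0 of the entire function α ↦ 1/Γ(k+α+ν+1), converges absolutely for every ξ∈ℂ; consequently the function J̃^{(n)}_ν(z) := Σ_{k=0}^∞ ((−1)^k/k!)·(z/2)^{2k+ν} · (∂ⁿ/∂αⁿ)[1/Γ(k+α+ν+1)]|_{α=0} is well defined (the series over k has infinite radius of convergence in the variable (z/2)²). -/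
set_option maxHeartbeats 1000000

open Complex

/-- Cauchy estimate on the unit circle for an entire function. -/
lemma cauchy_est {f : ℂ → ℂ} (hf : Differentiable ℂ f) (c : ℂ) {M : ℝ}
    (hM : ∀ θ : ℝ, ‖f (circleMap c 1 θ)‖ ≤ M) (n : ℕ) :
    ‖iteratedDeriv n f c‖ ≤ n.factorial * M := by
  have h := hf.hasFPowerSeriesOnBall c (R := 1) one_pos
  have h2 := h.factorial_smul (y := (1 : ℂ)) n
  have h1 : iteratedDeriv n f c = iteratedFDeriv ℂ n f c (fun _ => 1) :=
    iteratedDeriv_eq_iteratedFDeriv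
  rw [h1, ← h2, nsmul_eq_mul, norm_mul, Complex.norm_natCast]
  have hMnn : (0 : ℝ) ≤ M := le_trans (norm_nonneg _) (hM 0)
  have hle : ‖(cauchyPowerSeries f c 1 n) (fun _ => (1 : ℂ))‖ ≤ M := by
    refine le_trans ((cauchyPowerSeries f c 1 n).le_opNorm _) ?_
    have hb := norm_cauchyPowerSeries_le f c 1 n
    simp only [abs_one, inv_one, one_pow, mul_one] at hb
    have hint : (∫ θ : ℝ in (0)..2 * Real.pi, ‖f (circleMap c 1 θ)‖) ≤
        (2 * Real.pi) * M := by
      have hle2 : (∫ θ : ℝ in (0)..2 * Real.pi, ‖f (circleMap c 1 θ)‖) ≤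
          ∫ _ : ℝ in (0)..2 * Real.pi, M := by
        apply intervalIntegral.integral_mono_on Real.two_pi_pos.le
        · exact ((hf.continuous.comp (continuous_circleMap c 1)).norm).intervalIntegrable _ _
        · exact intervalIntegrable_const
        · exact fun θ _ => hM θ
      simpa using hle2
    calc ‖cauchyPowerSeries f c 1 n‖ * ∏ _i : Fin n, ‖(1 : ℂ)‖
        = ‖cauchyPowerSeries f c 1 n‖ := by simp
      _ ≤ (2 * Real.pi)⁻¹ * ∫ θ : ℝ in (0)..2 * Real.pi, ‖f (circleMap c 1 θ)‖ := hb
      _ ≤ (2 * Real.pi)⁻¹ * ((2 * Real.pi) * M) :=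
          mul_le_mul_of_nonneg_left hint (by positivity)
      _ = M := by field_simp
  exact mul_le_mul_of_nonneg_left hle (by positivity)

/-- for every `n ∈ ℕ` and `ν ∈ ℂ`, the power series
`Σ_k ((-1)^k/k!) · (∂ⁿ/∂αⁿ)[1/Γ(k+α+ν+1)]|_{α=0} · ξ^k` converges absolutely for every
`ξ ∈ ℂ` (infinite radius of convergence), so that the functions `J̃^{(n)}_ν` are well
defined. -/
theorem besselJt_series_entire (n : ℕ) (ν : ℂ) (ξ : ℂ) :
    Summable (fun k : ℕ =>
      ‖((-1 : ℂ) ^ k / (k.factorial : ℂ)) *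
        iteratedDeriv n (fun α : ℂ => 1 / Complex.Gamma ((k : ℂ) + α + ν + 1)) 0 *
        ξ ^ k‖) := by
  set k0 : ℕ := ⌈‖ν‖⌉₊ + 3 with hk0
  have hk0ℝ : (‖ν‖ : ℝ) + 3 ≤ (k0 : ℝ) := by
    have := Nat.le_ceil ‖ν‖
    push_cast [hk0]
    linarith
  -- bound for 1/Γ on a compact ball
  obtain ⟨C, hC⟩ := (isCompact_closedBall (0 : ℂ) (2 * k0)).exists_bound_of_continuousOn
    (Complex.differentiable_one_div_Gamma.continuous.continuousOn)
  have hCnn : 0 ≤ C := le_trans (norm_nonneg _) (hC 0 (by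
    simp only [Metric.mem_closedBall, dist_zero_right, norm_zero]
    positivity))
  -- key decay bound
  have key : ∀ (w : ℂ), ‖w‖ ≤ ‖ν‖ + 2 → ∀ m : ℕ,
      ‖(Complex.Gamma (w + (k0 : ℂ) + (m : ℂ)))⁻¹‖ ≤ C / m.factorial := by
    intro w hw m
    induction m with
    | zero =>
      simp only [Nat.cast_zero, add_zero, Nat.factorial_zero, Nat.cast_one, div_one]
      apply hC
      simp only [Metric.mem_closedBall, dist_zero_right]
      calc ‖w + (k0 : ℂ)‖ ≤ ‖w‖ + ‖(k0 : ℂ)‖ := norm_add_le _ _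
        _ ≤ (‖ν‖ + 2) + k0 := by
            simp only [Complex.norm_natCast]; linarith
        _ ≤ 2 * k0 := by linarith
    | succ m ih =>
      have hzlb : (m : ℝ) + 1 ≤ ‖w + (k0 : ℂ) + (m : ℂ)‖ := by
        have hub : ‖((k0 : ℂ) + (m : ℂ))‖ - ‖w‖ ≤ ‖w + ((k0 : ℂ) + (m : ℂ))‖ := by
          have h := norm_add_le (w + ((k0 : ℂ) + (m : ℂ))) (-w)
          have he : w + ((k0 : ℂ) + (m : ℂ)) + -w = (k0 : ℂ) + (m : ℂ) := by ring
          rw [he, norm_neg] at h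
          linarith
        have hnorm : ‖((k0 : ℂ) + (m : ℂ))‖ = (k0 : ℝ) + m := by
          rw [← Nat.cast_add, Complex.norm_natCast, Nat.cast_add]
        rw [hnorm] at hub
        have h2 : ‖w + ((k0 : ℂ) + (m : ℂ))‖ = ‖w + (k0 : ℂ) + (m : ℂ)‖ := by ring_nf
        rw [h2] at hub
        linarith
      have hzne : w + (k0 : ℂ) + (m : ℂ) ≠ 0 := by
        intro h
        rw [h, norm_zero] at hzlb
        have : (0 : ℝ) ≤ m := Nat.cast_nonneg m
        linarith
      have hrec : (Complex.Gamma (w + (k0 : ℂ) + ((m : ℕ) + 1 : ℕ)))⁻¹ =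
          (w + (k0 : ℂ) + (m : ℂ))⁻¹ * (Complex.Gamma (w + (k0 : ℂ) + (m : ℂ)))⁻¹ := by
        have harg : w + (k0 : ℂ) + ((m : ℕ) + 1 : ℕ) = (w + (k0 : ℂ) + (m : ℂ)) + 1 := by
          push_cast; ring
        rw [harg, Complex.Gamma_add_one _ hzne, mul_inv]
      rw [hrec, norm_mul, norm_inv]
      have h1 : ‖w + (k0 : ℂ) + (m : ℂ)‖⁻¹ ≤ ((m : ℝ) + 1)⁻¹ :=
        inv_anti₀ (by positivity) hzlb
      calc ‖w + (k0 : ℂ) + (m : ℂ)‖⁻¹ * ‖(Complex.Gamma (w + (k0 : ℂ) + (m : ℂ)))⁻¹‖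
          ≤ ((m : ℝ) + 1)⁻¹ * (C / m.factorial) :=
            mul_le_mul h1 ih (norm_nonneg _) (by positivity)
        _ = C / (m + 1).factorial := by
            rw [Nat.factorial_succ]
            push_cast
            rw [mul_comm, ← div_eq_mul_inv, div_div, mul_comm ((m.factorial : ℝ))]
  -- derivative bound for k = m + k0
  have dbound : ∀ m : ℕ,
      ‖iteratedDeriv n (fun α : ℂ => 1 / Complex.Gamma (((m + k0 : ℕ) : ℂ) + α + ν + 1)) 0‖
        ≤ n.factorial * (C / m.factorial) := by
    intro m
    apply cauchy_est
    · simp only [one_div]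
      exact Complex.differentiable_one_div_Gamma.comp (by fun_prop)
    · intro θ
      have harg : (((m + k0 : ℕ) : ℂ)) + circleMap 0 1 θ + ν + 1 =
          (circleMap 0 1 θ + ν + 1) + (k0 : ℂ) + (m : ℂ) := by push_cast; ring
      have hwle : ‖circleMap 0 1 θ + ν + 1‖ ≤ ‖ν‖ + 2 := by
        have h1 : ‖circleMap 0 1 θ‖ = 1 := by
          simpa using Complex.abs_circleMap_zero 1 θ
        calc ‖circleMap 0 1 θ + ν + 1‖ ≤ ‖circleMap 0 1 θ + ν‖ + ‖(1 : ℂ)‖ := norm_add_le _ _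
          _ ≤ (‖circleMap 0 1 θ‖ + ‖ν‖) + 1 := by
              have := norm_add_le (circleMap 0 1 θ) ν
              simp only [norm_one]
              linarith
          _ = ‖ν‖ + 2 := by rw [h1]; ring
      rw [one_div, harg]
      exact key _ hwle m
  -- conclude by comparison with the exponential series
  apply (summable_nat_add_iff k0).mp
  have hmaj : Summable (fun m : ℕ =>
      ((n.factorial : ℝ) * C * ‖ξ‖ ^ k0) * (‖ξ‖ ^ m / m.factorial)) :=
    (Real.summable_pow_div_factorial ‖ξ‖).mul_left _
  refine Summable.of_nonneg_of_le (fun m => norm_nonneg _) (fun m => ?_) hmaj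
  rw [norm_mul, norm_mul]
  have h1 : ‖((-1 : ℂ) ^ (m + k0) / ((m + k0).factorial : ℂ))‖ ≤ 1 := by
    rw [norm_div, norm_pow, norm_neg, norm_one, one_pow]
    rw [Complex.norm_natCast]
    rw [div_le_one (by positivity)]
    exact_mod_cast (m + k0).factorial_pos
  have h2 : ‖ξ ^ (m + k0)‖ = ‖ξ‖ ^ m * ‖ξ‖ ^ k0 := by
    rw [norm_pow, pow_add]
  have h3 := dbound m
  calc ‖((-1 : ℂ) ^ (m + k0) / (((m + k0).factorial : ℕ) : ℂ))‖ *
        ‖iteratedDeriv n (fun α : ℂ => 1 / Complex.Gamma (((m + k0 : ℕ) : ℂ) + α + ν + 1)) 0‖ *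
        ‖ξ ^ (m + k0)‖
      ≤ 1 * (n.factorial * (C / m.factorial)) * (‖ξ‖ ^ m * ‖ξ‖ ^ k0) := by
        rw [h2]
        apply mul_le_mul _ le_rfl (by positivity) (by positivity)
        exact mul_le_mul h1 h3 (norm_nonneg _) zero_le_one
    _ = ((n.factorial : ℝ) * C * ‖ξ‖ ^ k0) * (‖ξ‖ ^ m / m.factorial) := by
        field_simp
end

section
/- The reciprocal Gamma function satisfies: the first derivative of α ↦ 1/Γ(α+1) at α=0 equals the Euler–Mascheroni constant γ, and the second derivative of α ↦ 1/Γ(α+1) at α=0 equals γ² − π²/6. Equivalently, the functions J̃^{(1)}_0 and J̃^{(2)}_0 are regular at the origin with J̃^{(1)}_0(0) = γ and J̃^{(2)}_0(0) = γ² − π²/6. -/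
open Complex Real

noncomputable def fG : ℂ → ℂ := fun α => (Complex.Gamma (α + 1))⁻¹

lemma fG_diff : Differentiable ℂ fG :=
  Complex.differentiable_one_div_Gamma.comp (differentiable_id.add_const 1)

lemma deriv_diff {f : ℂ → ℂ} (hf : Differentiable ℂ f) : Differentiable ℂ (deriv f) := by
  have := (contDiff_infty_iff_deriv.mp hf.contDiff).2
  exact this.differentiable (by simp)

lemma fG_zero : fG 0 = 1 := by simp [fG, Complex.Gamma_one]

lemma fG_hasDerivAt_zero :
    HasDerivAt fG ((Real.eulerMascheroniConstant : ℂ)) 0 := by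
  have hinner : HasDerivAt (fun α : ℂ => α + 1) 1 0 := (hasDerivAt_id 0).add_const 1
  have hG : HasDerivAt (fun α : ℂ => Complex.Gamma (α + 1))
      ((-(Real.eulerMascheroniConstant : ℂ)) * 1) 0 := by
    have h1 : HasDerivAt Complex.Gamma (-(Real.eulerMascheroniConstant : ℂ)) ((0 : ℂ) + 1) := by
      simpa using Complex.hasDerivAt_Gamma_one
    exact h1.comp 0 hinner
  have := hG.inv (by simp [Complex.Gamma_one])
  refine HasDerivAt.congr_deriv this ?_
  simp [Complex.Gamma_one]

lemma fG_deriv_zero : deriv fG 0 = (Real.eulerMascheroniConstant : ℂ) :=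
  fG_hasDerivAt_zero.deriv

/-- the first derivative of `α ↦ 1/Γ(α+1)` at `α = 0` equals the
Euler–Mascheroni constant `γ`, and its second derivative at `α = 0` equals `γ² − π²/6`.
Equivalently, `J̃^{(1)}_0(0) = γ` and `J̃^{(2)}_0(0) = γ² − π²/6`. -/
theorem reciprocal_gamma_derivs_at_zero :
    deriv (fun α : ℂ => 1 / Complex.Gamma (α + 1)) 0
      = (Real.eulerMascheroniConstant : ℂ) ∧
    iteratedDeriv 2 (fun α : ℂ => 1 / Complex.Gamma (α + 1)) 0
      = (Real.eulerMascheroniConstant : ℂ) ^ 2 - (Real.pi : ℂ) ^ 2 / 6 := by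
  have hfun : (fun α : ℂ => 1 / Complex.Gamma (α + 1)) = fG := by
    funext α; simp [fG, one_div]
  rw [hfun]
  set γc : ℂ := (Real.eulerMascheroniConstant : ℂ)
  set πc : ℂ := (Real.pi : ℂ) with hπc
  have hπne : πc ≠ 0 := Complex.ofReal_ne_zero.mpr Real.pi_ne_zero
  set g1 : ℂ → ℂ := deriv fG with hg1def
  set g2 : ℂ → ℂ := deriv g1 with hg2def
  have hf : Differentiable ℂ fG := fG_diff
  have hg1 : Differentiable ℂ g1 := deriv_diff hf
  have hg2 : Differentiable ℂ g2 := deriv_diff hg1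
  have Hf : ∀ α : ℂ, HasDerivAt fG (g1 α) α := fun α => (hf α).hasDerivAt
  have Hg1 : ∀ α : ℂ, HasDerivAt g1 (g2 α) α := fun α => (hg1 α).hasDerivAt
  -- the symmetric product h and its derivatives
  set h : ℂ → ℂ := fun α => fG α * fG (-α) with hhdef
  set h1e : ℂ → ℂ := fun α => g1 α * fG (-α) - fG α * g1 (-α) with h1edef
  set h2e : ℂ → ℂ := fun α => g2 α * fG (-α) - 2 * (g1 α * g1 (-α)) + fG α * g2 (-α) with h2edef
  have Hfneg : ∀ α : ℂ, HasDerivAt (fun x => fG (-x)) (-(g1 (-α))) α := by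
    intro α
    have := (Hf (-α)).comp α (hasDerivAt_neg α)
    rw [mul_neg_one] at this
    exact this
  have Hg1neg : ∀ α : ℂ, HasDerivAt (fun x => g1 (-x)) (-(g2 (-α))) α := by
    intro α
    have := (Hg1 (-α)).comp α (hasDerivAt_neg α)
    rw [mul_neg_one] at this
    exact this
  have Hh1 : ∀ α : ℂ, HasDerivAt h (h1e α) α := by
    intro α
    have := (Hf α).mul (Hfneg α)
    refine HasDerivAt.congr_deriv this ?_
    try simp only [h1edef]
    try ring
  have Hh2 : ∀ α : ℂ, HasDerivAt h1e (h2e α) α := by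
    intro α
    have := ((Hg1 α).mul (Hfneg α)).sub ((Hf α).mul (Hg1neg α))
    refine HasDerivAt.congr_deriv this ?_
    try simp only [h2edef]
    try ring
  -- P and S and their derivatives
  set P : ℂ → ℂ := fun α => πc * α * h α with hPdef
  set S : ℂ → ℂ := fun α => Complex.sin (πc * α) with hSdef
  set P1e : ℂ → ℂ := fun α => πc * h α + πc * α * h1e α with hP1def
  set P2e : ℂ → ℂ := fun α => 2 * πc * h1e α + πc * α * h2e α with hP2def
  set S1 : ℂ → ℂ := fun α => πc * Complex.cos (πc * α) with hS1def
  set S2 : ℂ → ℂ := fun α => -(πc ^ 2) * Complex.sin (πc * α) with hS2def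
  have Hlin : ∀ α : ℂ, HasDerivAt (fun x : ℂ => πc * x) πc α := by
    intro α; simpa using (hasDerivAt_id α).const_mul πc
  have HP1 : ∀ α : ℂ, HasDerivAt P (P1e α) α := by
    intro α
    have := (Hlin α).mul (Hh1 α)
    refine HasDerivAt.congr_deriv this ?_
    try simp only [hP1def]
    try ring
  have HP2 : ∀ α : ℂ, HasDerivAt P1e (P2e α) α := by
    intro α
    have := ((Hh1 α).const_mul πc).add ((Hlin α).mul (Hh2 α))
    refine HasDerivAt.congr_deriv this ?_
    try simp only [hP2def]
    try ring
  have Hh2e0 : DifferentiableAt ℂ h2e 0 := by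
    apply DifferentiableAt.add
    · apply DifferentiableAt.sub
      · exact (hg2 0).mul ((hf (-0)).comp 0 differentiable_neg.differentiableAt)
      · exact ((hg1 0).mul ((hg1 (-0)).comp 0 differentiable_neg.differentiableAt)).const_mul 2
    · exact (hf 0).mul ((hg2 (-0)).comp 0 differentiable_neg.differentiableAt)
  have HP3 : HasDerivAt P2e (3 * πc * h2e 0) 0 := by
    have := ((Hh2 0).const_mul (2 * πc)).add ((Hlin 0).mul Hh2e0.hasDerivAt)
    refine HasDerivAt.congr_deriv this ?_
    ring
  have HS1 : ∀ α : ℂ, HasDerivAt S (S1 α) α := by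
    intro α
    have := (Complex.hasDerivAt_sin (πc * α)).comp α (Hlin α)
    refine HasDerivAt.congr_deriv this ?_
    try simp only [hS1def]
    try ring
  have HS2 : ∀ α : ℂ, HasDerivAt S1 (S2 α) α := by
    intro α
    have := ((Complex.hasDerivAt_cos (πc * α)).comp α (Hlin α)).const_mul πc
    refine HasDerivAt.congr_deriv this ?_
    try simp only [hS2def]
    try ring
  have HS3 : HasDerivAt S2 (-(πc ^ 3)) 0 := by
    have := ((Complex.hasDerivAt_sin (πc * 0)).comp 0 (Hlin 0)).const_mul (-(πc ^ 2))
    refine HasDerivAt.congr_deriv this ?_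
    simp only [mul_zero, Complex.cos_zero]
    ring
  -- the reflection identity P = S
  have hPS : P = S := by
    funext α
    rcases eq_or_ne α 0 with rfl | hα
    · simp [hPdef, hSdef]
    · have hrefl : Complex.Gamma α * Complex.Gamma (1 - α) = πc / Complex.sin (πc * α) :=
        Complex.Gamma_mul_Gamma_one_sub α
      have hadd : Complex.Gamma (α + 1) = α * Complex.Gamma α := Complex.Gamma_add_one α hα
      have : h α = (α * (Complex.Gamma α * Complex.Gamma (1 - α)))⁻¹ := by
        simp only [hhdef, fG, hadd]
        rw [show -α + 1 = 1 - α by ring]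
        rw [mul_inv, mul_inv]
        ring
      rw [hPdef]
      simp only [this, hrefl]
      rw [mul_inv, inv_div]
      field_simp
      ring
  -- propagate equality through derivatives
  have hPS1 : P1e = S1 := by
    funext α
    rw [← (HP1 α).deriv, ← (HS1 α).deriv, hPS]
  have hPS2 : P2e = S2 := by
    funext α
    rw [← (HP2 α).deriv, ← (HS2 α).deriv, hPS1]
  have hkey : 3 * πc * h2e 0 = -(πc ^ 3) := by
    rw [← HP3.deriv, ← HS3.deriv, hPS2]
  -- compute h2e 0
  have hg10 : g1 0 = γc := fG_deriv_zero
  have hh2e0 : h2e 0 = 2 * g2 0 - 2 * γc ^ 2 := by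
    simp only [h2edef, neg_zero, fG_zero, hg10]
    ring
  have hg20 : g2 0 = γc ^ 2 - πc ^ 2 / 6 := by
    rw [hh2e0] at hkey
    have h6 : (6 : ℂ) * πc ≠ 0 := mul_ne_zero (by norm_num) hπne
    have heq : 6 * πc * g2 0 = 6 * πc * (γc ^ 2 - πc ^ 2 / 6) := by linear_combination hkey
    exact mul_left_cancel₀ h6 heq
  refine ⟨hg10, ?_⟩
  rw [show (2 : ℕ) = 1 + 1 from rfl, iteratedDeriv_succ, iteratedDeriv_one]
  exact hg20
end

section
/- Let w∈ℂ∖{0} and t>0. Then lim_{q→1⁻} 4·Σ_{n=1}^∞ n·e^{−t|w|[n]_q} = 4·Σ_{n=1}^∞ n·e^{−t|w|n}; that is, as q increases to 1, the heat trace of the Podleś-sphere Dirac operator converges to the heat trace of the (scaled) Dirac operator on the round 2-sphere. -/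
open Complex Real Filter

lemma qnum_eq_sum (q : ℝ) (hq0 : 0 < q) (hq1 : q < 1) (n : ℕ) :
    qnum q n = (∑ k ∈ Finset.range n, (q ^ 2) ^ k) * q / q ^ n := by
  have hqne : q ≠ 0 := ne_of_gt hq0
  have hden : q ^ (-1 : ℤ) - q ≠ 0 := by
    have h1 : 1 < q⁻¹ := (one_lt_inv₀ hq0).mpr hq1
    rw [zpow_neg_one]
    intro h; nlinarith
  have hfac : (∑ k ∈ Finset.range n, (q ^ 2) ^ k) * (q ^ 2 - 1) = q ^ (2 * n) - 1 := by
    have := geom_sum_mul (q ^ 2) n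
    rw [this, ← pow_mul]
  rw [qnum, div_eq_div_iff hden (by positivity)]
  have h1 : q ^ (-(n:ℤ)) = (q ^ n)⁻¹ := by rw [zpow_neg, zpow_natCast]
  have h2 : q ^ ((n:ℤ)) = q ^ n := zpow_natCast q n
  have h3 : q ^ (-1:ℤ) = q⁻¹ := zpow_neg_one q
  rw [h1, h2, h3]
  field_simp
  linear_combination hfac

lemma aux_ineq (q : ℝ) (hq0 : 0 < q) (hq1 : q < 1) (n : ℕ) :
    (n : ℝ) * (q ^ n * (1 - q ^ 2)) ≤ q * (1 - q ^ (2 * n)) := by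
  induction n with
  | zero => simp
  | succ n ih =>
    have hB : 1 + (n : ℝ) * (q - 1) ≤ q ^ n := by
      have := one_add_mul_le_pow (a := q - 1) (by linarith) n
      simpa using this
    have ha0 : 0 < q ^ n := by positivity
    have ha1 : q ^ n ≤ 1 := pow_le_one₀ hq0.le hq1.le
    have h2n : q ^ (2 * (n + 1)) = (q ^ n) ^ 2 * q ^ 2 := by ring
    have h2n' : q ^ (2 * n) = (q ^ n) ^ 2 := by rw [← pow_mul, Nat.mul_comm]
    have hsucc : q ^ (n + 1) = q ^ n * q := pow_succ q n
    rw [h2n, hsucc]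
    rw [h2n'] at ih
    push_cast
    set a := q ^ n with ha
    have key : q * (1 - a) ≤ (n : ℝ) * (1 - q) := by nlinarith
    nlinarith [mul_nonneg (mul_nonneg (by nlinarith : (0:ℝ) ≤ 1 - q ^ 2) ha0.le)
      (by nlinarith : (0:ℝ) ≤ (n : ℝ) * (1 - q) + q * (a - 1))]

lemma qnum_ge (q : ℝ) (hq0 : 0 < q) (hq1 : q < 1) (n : ℕ) :
    (n : ℝ) ≤ qnum q n := by
  have hS : (n : ℝ) * q ^ n ≤ (∑ k ∈ Finset.range n, (q ^ 2) ^ k) * q := by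
    have := aux_ineq q hq0 hq1 n
    have hfac : (∑ k ∈ Finset.range n, (q ^ 2) ^ k) * (q ^ 2 - 1) = q ^ (2 * n) - 1 := by
      have := geom_sum_mul (q ^ 2) n
      rw [this, ← pow_mul]
    have h1q2 : (0:ℝ) < 1 - q ^ 2 := by nlinarith
    have heq : q * (1 - q ^ (2 * n)) = (∑ k ∈ Finset.range n, (q ^ 2) ^ k) * q * (1 - q ^ 2) := by
      linear_combination q * hfac
    have h' : (n : ℝ) * q ^ n * (1 - q ^ 2) ≤
        (∑ k ∈ Finset.range n, (q ^ 2) ^ k) * q * (1 - q ^ 2) := by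
      rw [← heq]; linarith [this]
    exact le_of_mul_le_mul_right h' h1q2
  rw [qnum_eq_sum q hq0 hq1, le_div_iff₀ (by positivity)]
  linarith

lemma qnum_tendsto (n : ℕ) :
    Tendsto (fun q : ℝ => qnum q n) (nhdsWithin 1 (Set.Ioo (0:ℝ) 1)) (nhds (n : ℝ)) := by
  have hc : ContinuousAt (fun q : ℝ => (∑ k ∈ Finset.range n, (q ^ 2) ^ k) * q / q ^ n) 1 := by
    apply ContinuousAt.div
    · fun_prop
    · fun_prop
    · simp
  have h : Tendsto (fun q : ℝ => (∑ k ∈ Finset.range n, (q ^ 2) ^ k) * q / q ^ n)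
      (nhdsWithin 1 (Set.Ioo (0:ℝ) 1)) (nhds (n : ℝ)) := by
    have h0 := hc.continuousWithinAt (s := Set.Ioo (0:ℝ) 1)
    rw [ContinuousWithinAt] at h0
    convert h0 using 2
    norm_num
  apply h.congr'
  filter_upwards [self_mem_nhdsWithin] with q hq
  exact (qnum_eq_sum q hq.1 hq.2 n).symm

/-- as `q → 1⁻`, the Podleś-sphere heat trace converges to the classical
heat trace of the (scaled) Dirac operator on the round 2-sphere. -/
theorem heatTrace_q_to_one (w : ℂ) (hw : w ≠ 0) (t : ℝ) (ht : 0 < t) :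
    Filter.Tendsto
      (fun q : ℝ => 4 * ∑' n : ℕ, ((n : ℝ) + 1) *
        Real.exp (-(t * (‖w‖ * qnum q (n + 1)))))
      (nhdsWithin 1 (Set.Ioo (0 : ℝ) 1))
      (nhds (4 * ∑' n : ℕ, ((n : ℝ) + 1) *
        Real.exp (-(t * (‖w‖ * ((n : ℝ) + 1)))))) := by
  have hc : 0 < t * ‖w‖ := by
    have : 0 < ‖w‖ := norm_pos_iff.mpr hw
    positivity
  set c := t * ‖w‖ with hcdef
  apply Tendsto.const_mul
  set r := Real.exp (-c) with hr
  have hr0 : 0 < r := Real.exp_pos _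
  have hr1 : r < 1 := Real.exp_lt_one_iff.mpr (by linarith)
  have hbound_sum : Summable (fun k : ℕ => ((k : ℝ) + 1) * Real.exp (-(c * ((k : ℝ) + 1)))) := by
    have h1 : Summable (fun k : ℕ => ((k : ℝ) + 1) * r ^ k) := by
      have := summable_pow_mul_geometric_of_norm_lt_one (R := ℝ) 1
        (r := r) (by rw [Real.norm_eq_abs, abs_of_pos hr0]; exact hr1)
      simpa [add_mul, one_mul, pow_one] using this.add (summable_geometric_of_lt_one hr0.le hr1)
    have h2 : ∀ k : ℕ, Real.exp (-(c * ((k : ℝ) + 1))) = r ^ (k + 1) := by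
      intro k
      rw [hr, ← Real.exp_nat_mul]
      congr 1
      push_cast
      ring
    apply Summable.of_nonneg_of_le (fun k => by positivity) _ (h1.mul_left r)
    intro k
    rw [h2 k, pow_succ]
    apply le_of_eq
    ring
  apply tendsto_tsum_of_dominated_convergence hbound_sum
  · intro k
    apply Tendsto.const_mul
    have h1 : Tendsto (fun q : ℝ => qnum q (k + 1)) (nhdsWithin 1 (Set.Ioo (0:ℝ) 1))
        (nhds ((k : ℝ) + 1)) := by
      have := qnum_tendsto (k + 1)
      simpa using this
    have h2 : Tendsto (fun x : ℝ => Real.exp (-(t * (‖w‖ * x)))) (nhds ((k:ℝ)+1))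
        (nhds (Real.exp (-(t * (‖w‖ * ((k:ℝ)+1)))))) := by
      have hcont : Continuous fun x : ℝ => Real.exp (-(t * (‖w‖ * x))) := by
        continuity
      exact hcont.tendsto _
    exact h2.comp h1
  · filter_upwards [self_mem_nhdsWithin] with q hq k
    have hnn : (0:ℝ) ≤ ((k:ℝ)+1) * Real.exp (-(t * (‖w‖ * qnum q (k+1)))) := by
      positivity
    rw [Real.norm_eq_abs, _root_.abs_of_nonneg hnn]
    apply mul_le_mul_of_nonneg_left _ (by positivity)
    rw [Real.exp_le_exp]
    have := qnum_ge q hq.1 hq.2 (k + 1)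
    push_cast at this
    rw [hcdef]
    nlinarith [hc, this]
end
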